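/- arXiv:2605.00305 — 3 statements merged into one kernel-verified Lean document; each statement's English description precedes it below -/
import Mathlib

section
/- Let φ: ℝ → ℝ be strictly convex satisfying the flatness hypothesis: for each irreducible fraction p/q, 0 < φ(x) − φ(p/q) − φ'₊(p/q)(x − p/q) < u_q(x − p/q) for x ∈ (p/q, p/q + 1/(4q)), with ∑_q q^{2+ν} u_q(1/q^{1+ν}) < ∞ for some ν ∈ (0,1). Let ψ be the convex conjugate of φ. Then ψ is C¹, Dψ is nonconstant and continuous, and D²ψ exists and equals 0 at Lebesgue-almost every point. -/
open Filter Set Topology MeasureTheory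

namespace Stmt7Aux


noncomputable def sbStep (x : ℝ) (s : ℤ × ℕ × ℤ × ℕ) : ℤ × ℕ × ℤ × ℕ :=
  if ((s.1 + s.2.2.1 : ℤ) : ℝ) / ((s.2.1 + s.2.2.2 : ℕ) : ℝ) < x then
    (s.1 + s.2.2.1, s.2.1 + s.2.2.2, s.2.2.1, s.2.2.2)
  else
    (s.1, s.2.1, s.1 + s.2.2.1, s.2.1 + s.2.2.2)

noncomputable def sb (x : ℝ) : ℕ → ℤ × ℕ × ℤ × ℕ
  | 0 => (⌊x⌋, 1, ⌊x⌋ + 1, 1)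
  | n+1 => sbStep x (sb x n)

lemma sb_succ (x : ℝ) (n : ℕ) : sb x (n+1) = sbStep x (sb x n) := rfl

lemma irr_ne_div {x : ℝ} (hx : Irrational x) (p : ℤ) (q : ℕ) :
    x ≠ (p : ℝ) / (q : ℝ) := by
  intro h
  have : ((p / q : ℚ) : ℝ) = (p : ℝ) / (q : ℝ) := by push_cast; ring
  exact hx ⟨(p / q : ℚ), by rw [this, h]⟩

structure SBInv (x : ℝ) (s : ℤ × ℕ × ℤ × ℕ) : Prop where
  hb : 0 < s.2.1
  hd : 0 < s.2.2.2
  hlt : (s.1 : ℝ) / (s.2.1 : ℝ) < x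
  hgt : x < (s.2.2.1 : ℝ) / (s.2.2.2 : ℝ)
  hdet : s.2.2.1 * (s.2.1 : ℤ) - s.1 * (s.2.2.2 : ℤ) = 1

variable {x : ℝ}

lemma sbinv (hx : Irrational x) : ∀ n, SBInv x (sb x n) := by
  intro n
  induction n with
  | zero =>
    refine ⟨one_pos, one_pos, ?_, ?_, by simp [sb]⟩
    · show ((⌊x⌋ : ℝ) / ((1:ℕ) : ℝ)) < x
      rw [Nat.cast_one, div_one]
      exact lt_of_le_of_ne (Int.floor_le x)
        (fun h => hx ⟨(⌊x⌋ : ℚ), by push_cast; exact h⟩)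
    · show x < (((⌊x⌋ + 1 : ℤ)) : ℝ) / ((1:ℕ) : ℝ)
      rw [Nat.cast_one, div_one]
      push_cast
      exact Int.lt_floor_add_one x
  | succ n ih =>
    obtain ⟨hb, hd, hlt, hgt, hdet⟩ := ih
    rw [sb_succ, sbStep]
    set s := sb x n with hs
    by_cases hcond : ((s.1 + s.2.2.1 : ℤ) : ℝ) / ((s.2.1 + s.2.2.2 : ℕ) : ℝ) < x
    · rw [if_pos hcond]
      exact ⟨by positivity, hd, hcond, hgt, by push_cast at hdet ⊢; linarith⟩
    · rw [if_neg hcond]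
      push_neg at hcond
      have hne := irr_ne_div hx (s.1 + s.2.2.1) (s.2.1 + s.2.2.2)
      refine ⟨hb, by positivity, hlt, ?_, by push_cast at hdet ⊢; linarith⟩
      show x < ((s.1 + s.2.2.1 : ℤ) : ℝ) / ((s.2.1 + s.2.2.2 : ℕ) : ℝ)
      exact lt_of_le_of_ne hcond hne

/-- the basic gap estimate: x - a/b < 1/(b*d) -/
lemma sb_gap (hx : Irrational x) (n : ℕ) :
    x - ((sb x n).1 : ℝ) / ((sb x n).2.1 : ℝ)
      < 1 / (((sb x n).2.1 : ℝ) * ((sb x n).2.2.2 : ℝ)) := by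
  obtain ⟨hb, hd, hlt, hgt, hdet⟩ := sbinv hx n
  set s := sb x n
  have hb' : (0:ℝ) < s.2.1 := by exact_mod_cast hb
  have hd' : (0:ℝ) < s.2.2.2 := by exact_mod_cast hd
  have hdet' : (s.2.2.1 : ℝ) * (s.2.1 : ℝ) - (s.1 : ℝ) * (s.2.2.2 : ℝ) = 1 := by
    exact_mod_cast hdet
  have key : (s.2.2.1 : ℝ) / s.2.2.2 - (s.1 : ℝ) / s.2.1 = 1 / (s.2.1 * s.2.2.2) := by
    rw [div_sub_div _ _ (ne_of_gt hd') (ne_of_gt hb'), div_eq_div_iff (by positivity) (by positivity)]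
    linear_combination (s.2.1 : ℝ) * (s.2.2.2 : ℝ) * hdet'
  linarith

lemma sb_b_mono (hx : Irrational x) : Monotone (fun n => (sb x n).2.1) := by
  apply monotone_nat_of_le_succ
  intro n
  rw [sb_succ, sbStep]
  split <;> simp

lemma sb_d_mono (hx : Irrational x) : Monotone (fun n => (sb x n).2.2.2) := by
  apply monotone_nat_of_le_succ
  intro n
  rw [sb_succ, sbStep]
  split <;> simp


lemma sb_cases (x : ℝ) (n : ℕ) :
    ((sb x (n+1)).1 = (sb x n).1 ∧ (sb x (n+1)).2.1 = (sb x n).2.1 ∧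
      (sb x (n+1)).2.2.1 = (sb x n).1 + (sb x n).2.2.1 ∧
      (sb x (n+1)).2.2.2 = (sb x n).2.1 + (sb x n).2.2.2) ∨
    ((sb x (n+1)).1 = (sb x n).1 + (sb x n).2.2.1 ∧
      (sb x (n+1)).2.1 = (sb x n).2.1 + (sb x n).2.2.2 ∧
      (sb x (n+1)).2.2.1 = (sb x n).2.2.1 ∧
      (sb x (n+1)).2.2.2 = (sb x n).2.2.2) := by
  rw [sb_succ, sbStep]
  split
  · right; exact ⟨rfl, rfl, rfl, rfl⟩
  · left; exact ⟨rfl, rfl, rfl, rfl⟩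

/-- the upper gap estimate: c/d - x < 1/(b*d) -/
lemma sb_gap' (hx : Irrational x) (n : ℕ) :
    ((sb x n).2.2.1 : ℝ) / ((sb x n).2.2.2 : ℝ) - x
      < 1 / (((sb x n).2.1 : ℝ) * ((sb x n).2.2.2 : ℝ)) := by
  obtain ⟨hb, hd, hlt, hgt, hdet⟩ := sbinv hx n
  set s := sb x n
  have hb' : (0:ℝ) < s.2.1 := by exact_mod_cast hb
  have hd' : (0:ℝ) < s.2.2.2 := by exact_mod_cast hd
  have hdet' : (s.2.2.1 : ℝ) * (s.2.1 : ℝ) - (s.1 : ℝ) * (s.2.2.2 : ℝ) = 1 := by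
    exact_mod_cast hdet
  have key : (s.2.2.1 : ℝ) / s.2.2.2 - (s.1 : ℝ) / s.2.1 = 1 / (s.2.1 * s.2.2.2) := by
    rw [div_sub_div _ _ (ne_of_gt hd') (ne_of_gt hb'), div_eq_div_iff (by positivity) (by positivity)]
    linear_combination (s.2.1 : ℝ) * (s.2.2.2 : ℝ) * hdet'
  linarith

/-- infinitely many lower updates -/
lemma sb_lower_inf (hx : Irrational x) (n : ℕ) :
    ∃ m, n ≤ m ∧ (sb x (m+1)).2.1 = (sb x m).2.1 + (sb x m).2.2.2 := by
  by_contra hcon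
  push_neg at hcon
  have hstay : ∀ m, n ≤ m → ((sb x m).1 = (sb x n).1 ∧ (sb x m).2.1 = (sb x n).2.1 ∧
      (sb x n).2.2.2 + (m - n) ≤ (sb x m).2.2.2) := by
    intro m hm
    induction m, hm using Nat.le_induction with
    | base => exact ⟨rfl, rfl, by omega⟩
    | succ m hm ih =>
      rcases sb_cases x m with h | h
      · have hb1 : 0 < (sb x m).2.1 := (sbinv hx m).hb
        exact ⟨by rw [h.1, ih.1], by rw [h.2.1, ih.2.1], by
          have := h.2.2.2; have := ih.2.2; omega⟩
      · exact absurd h.2.1 (hcon m hm)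
  set a := (sb x n).1
  set b := (sb x n).2.1
  have hb : 0 < b := (sbinv hx n).hb
  have hb' : (0:ℝ) < b := by exact_mod_cast hb
  have hε : 0 < x - (a:ℝ)/b := sub_pos.2 (sbinv hx n).hlt
  obtain ⟨k, hk⟩ := exists_nat_gt (1 / ((x - (a:ℝ)/b) * b))
  have hkpos : (0:ℝ) < k := lt_trans (by positivity) hk
  obtain ⟨h1, h2, h3⟩ := hstay (n + k) (by omega)
  have hgap := sb_gap hx (n+k)
  rw [h1, h2] at hgap
  have hd3 : (k:ℝ) ≤ ((sb x (n+k)).2.2.2 : ℝ) := by exact_mod_cast le_trans (by omega) h3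
  have hmono : 1 / (b * ((sb x (n+k)).2.2.2 : ℝ)) ≤ 1 / (b * k) := by
    apply one_div_le_one_div_of_le (by positivity)
    exact mul_le_mul_of_nonneg_left hd3 (by positivity)
  have h5 : 1 / (b * (k:ℝ)) < x - (a:ℝ)/b := by
    rw [div_lt_iff₀ (by positivity)] at hk ⊢
    calc (1:ℝ) < k * ((x - (a:ℝ)/b) * b) := hk
    _ = (x - (a:ℝ)/b) * (b * k) := by ring
  linarith

/-- infinitely many upper updates -/
lemma sb_upper_inf (hx : Irrational x) (n : ℕ) :
    ∃ m, n ≤ m ∧ (sb x (m+1)).2.1 = (sb x m).2.1 ∧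
      (sb x (m+1)).2.2.2 = (sb x m).2.1 + (sb x m).2.2.2 := by
  by_contra hcon
  push_neg at hcon
  have hstay : ∀ m, n ≤ m → ((sb x m).2.2.1 = (sb x n).2.2.1 ∧
      (sb x m).2.2.2 = (sb x n).2.2.2 ∧
      (sb x n).2.1 + (m - n) ≤ (sb x m).2.1) := by
    intro m hm
    induction m, hm using Nat.le_induction with
    | base => exact ⟨rfl, rfl, by omega⟩
    | succ m hm ih =>
      rcases sb_cases x m with h | h
      · exact absurd h.2.2.2 (hcon m hm h.2.1)
      · have hd1 : 0 < (sb x m).2.2.2 := (sbinv hx m).hd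
        exact ⟨by rw [h.2.2.1, ih.1], by rw [h.2.2.2, ih.2.1], by
          have := h.2.1; have := ih.2.2; omega⟩
  set c := (sb x n).2.2.1
  set d := (sb x n).2.2.2
  have hd : 0 < d := (sbinv hx n).hd
  have hd' : (0:ℝ) < d := by exact_mod_cast hd
  have hε : 0 < (c:ℝ)/d - x := sub_pos.2 (sbinv hx n).hgt
  obtain ⟨k, hk⟩ := exists_nat_gt (1 / (((c:ℝ)/d - x) * d))
  have hkpos : (0:ℝ) < k := lt_trans (by positivity) hk
  obtain ⟨h1, h2, h3⟩ := hstay (n + k) (by omega)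
  have hgap := sb_gap' hx (n+k)
  rw [h1, h2] at hgap
  have hb3 : (k:ℝ) ≤ ((sb x (n+k)).2.1 : ℝ) := by exact_mod_cast le_trans (by omega) h3
  have hmono : 1 / (((sb x (n+k)).2.1 : ℝ) * d) ≤ 1 / (k * d) := by
    apply one_div_le_one_div_of_le (by positivity)
    exact mul_le_mul_of_nonneg_right hb3 (by positivity)
  have h5 : 1 / ((k:ℝ) * d) < (c:ℝ)/d - x := by
    rw [div_lt_iff₀ (by positivity)] at hk ⊢
    calc (1:ℝ) < k * (((c:ℝ)/d - x) * d) := hk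
    _ = ((c:ℝ)/d - x) * (k * d) := by ring
  linarith

/-- One-sided Diophantine approximation: infinitely many coprime p/q with
    0 < x - p/q < 1/q^2. -/
theorem exists_good_approx (hx : Irrational x) (N : ℕ) :
    ∃ (p : ℤ) (q : ℕ), N ≤ q ∧ 0 < q ∧ Int.gcd p (q:ℤ) = 1 ∧
      0 < x - (p:ℝ)/(q:ℝ) ∧ x - (p:ℝ)/(q:ℝ) < 1/((q:ℝ)*(q:ℝ)) := by
  -- first: b gets arbitrarily large
  have hbig : ∀ N : ℕ, ∃ n, N ≤ (sb x n).2.1 := by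
    intro N
    induction N with
    | zero => exact ⟨0, by omega⟩
    | succ N ih =>
      obtain ⟨n, hn⟩ := ih
      obtain ⟨m, hm, hup⟩ := sb_lower_inf hx n
      refine ⟨m + 1, ?_⟩
      have hmono := sb_b_mono hx hm
      have hd : 0 < (sb x m).2.2.2 := (sbinv hx m).hd
      simp only at hmono
      omega
  obtain ⟨n₁, hn₁⟩ := hbig N
  obtain ⟨m, hm, hb1, hd1⟩ := sb_upper_inf hx n₁
  refine ⟨(sb x (m+1)).1, (sb x (m+1)).2.1, ?_, (sbinv hx (m+1)).hb, ?_, ?_, ?_⟩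
  · have hmono := sb_b_mono hx (show n₁ ≤ m + 1 by omega)
    simp only at hmono
    omega
  · -- coprimality from the determinant
    obtain ⟨_, _, _, _, hdet⟩ := sbinv hx (m+1)
    rw [← Int.isCoprime_iff_gcd_eq_one]
    exact ⟨-(sb x (m+1)).2.2.2, (sb x (m+1)).2.2.1, by linarith⟩
  · exact sub_pos.2 (sbinv hx (m+1)).hlt
  · have hgap := sb_gap hx (m+1)
    have hdb : ((sb x (m+1)).2.1 : ℝ) ≤ ((sb x (m+1)).2.2.2 : ℝ) := by
      have : (sb x (m+1)).2.1 ≤ (sb x (m+1)).2.2.2 := by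
        rw [hb1, hd1]
        have hd : 0 < (sb x m).2.2.2 := (sbinv hx m).hd
        omega
      exact_mod_cast this
    have hbpos : (0:ℝ) < ((sb x (m+1)).2.1 : ℝ) := by exact_mod_cast (sbinv hx (m+1)).hb
    have hdpos : (0:ℝ) < ((sb x (m+1)).2.2.2 : ℝ) := by exact_mod_cast (sbinv hx (m+1)).hd
    calc x - ((sb x (m+1)).1 : ℝ) / ((sb x (m+1)).2.1 : ℝ)
        < 1 / (((sb x (m+1)).2.1 : ℝ) * ((sb x (m+1)).2.2.2 : ℝ)) := hgap
    _ ≤ 1 / (((sb x (m+1)).2.1 : ℝ) * ((sb x (m+1)).2.1 : ℝ)) := by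
        apply one_div_le_one_div_of_le (by positivity)
        exact mul_le_mul_of_nonneg_left hdb (by positivity)



section Convex

variable {φ φp : ℝ → ℝ}

lemma slope3 (hφ : StrictConvexOn ℝ Set.univ φ) {a b c : ℝ} (hab : a < b) (hbc : b < c) :
    (φ b - φ a)/(b - a) ≤ (φ c - φ b)/(c - b) :=
  hφ.convexOn.slope_mono_adjacent trivial trivial hab hbc

lemma slope_left (hφ : StrictConvexOn ℝ Set.univ φ) {a b c : ℝ} (hab : a < b) (hbc : b < c) :
    (φ b - φ a)/(b - a) ≤ (φ c - φ a)/(c - a) := by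
  have h := slope3 hφ hab hbc
  rw [div_le_div_iff₀ (by linarith) (by linarith)] at h ⊢
  nlinarith

lemma slope_right (hφ : StrictConvexOn ℝ Set.univ φ) {a b c : ℝ} (hab : a < b) (hbc : b < c) :
    (φ c - φ a)/(c - a) ≤ (φ c - φ b)/(c - b) := by
  have h := slope3 hφ hab hbc
  rw [div_le_div_iff₀ (by linarith) (by linarith)] at h ⊢
  nlinarith

variable (hφ : StrictConvexOn ℝ Set.univ φ)
  (hp : ∀ x, Tendsto (fun t => (φ (x + t) - φ x) / t) (𝓝[>] 0) (𝓝 (φp x)))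

include hφ hp

lemma phip_le_slope {x z : ℝ} (h : x < z) : φp x ≤ (φ z - φ x)/(z - x) := by
  apply le_of_tendsto (hp x)
  filter_upwards [Ioo_mem_nhdsGT_of_mem (left_mem_Ico.2 (by linarith : (0:ℝ) < z - x))]
    with t ht
  obtain ⟨ht1, ht2⟩ := ht
  have := slope_left hφ (show x < x + t by linarith) (show x + t < z by linarith)
  simpa using this

lemma slope_le_phip {w x : ℝ} (h : w < x) : (φ x - φ w)/(x - w) ≤ φp x := by
  apply ge_of_tendsto (hp x)
  filter_upwards [self_mem_nhdsWithin] with t ht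
  have ht' : (0:ℝ) < t := ht
  have := slope3 hφ h (show x < x + t by linarith)
  simpa using this

/-- subgradient inequality for the right derivative -/
lemma subgrad {x z : ℝ} : φ x + φp x * (z - x) ≤ φ z := by
  rcases lt_trichotomy x z with h | h | h
  · have := (le_div_iff₀ (by linarith : (0:ℝ) < z - x)).mp (phip_le_slope hφ hp h)
    linarith
  · simp [h]
  · have := (div_le_iff₀ (by linarith : (0:ℝ) < x - z)).mp (slope_le_phip hφ hp h)
    nlinarith

lemma phip_mono : Monotone φp := by
  intro a b hab
  rcases eq_or_lt_of_le hab with rfl | h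
  · exact le_refl _
  · exact (phip_le_slope hφ hp h).trans (slope_le_phip hφ hp h)

end Convex



section Psi

variable {φ ψ : ℝ → ℝ}

lemma phi_cont (hφ : StrictConvexOn ℝ Set.univ φ) : Continuous φ := by
  rw [← continuousOn_univ]
  exact hφ.convexOn.continuousOn isOpen_univ

lemma psi_ub (hψ : ∀ y, IsLUB {z | ∃ x, z = x * y - φ x} (ψ y)) (x y : ℝ) :
    x * y - φ x ≤ ψ y := (hψ y).1 ⟨x, rfl⟩

lemma exists_max (hφ : StrictConvexOn ℝ Set.univ φ)
    (hψ : ∀ y, IsLUB {z | ∃ x, z = x * y - φ x} (ψ y)) (y : ℝ) :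
    ∃ x, (∀ z, z * y - φ z ≤ x * y - φ x) ∧ ψ y = x * y - φ x := by
  set f : ℝ → ℝ := fun z => z * y - φ z with hf
  have hfc : Continuous f := (continuous_id.mul continuous_const).sub (phi_cont hφ)
  have hup : ∀ z, f z ≤ ψ (y+1) - z := by
    intro z
    have := psi_ub hψ z (y+1)
    simp only [hf]
    nlinarith
  have hdn : ∀ z, f z ≤ ψ (y-1) + z := by
    intro z
    have := psi_ub hψ z (y-1)
    simp only [hf]
    nlinarith
  set R : ℝ := max (ψ (y+1) - f 0) (ψ (y-1) - f 0) + 1 with hR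
  have hR1 : ψ (y+1) - f 0 + 1 ≤ R := by
    have := le_max_left (ψ (y+1) - f 0) (ψ (y-1) - f 0); linarith
  have hR2 : ψ (y-1) - f 0 + 1 ≤ R := by
    have := le_max_right (ψ (y+1) - f 0) (ψ (y-1) - f 0); linarith
  have hR0 : 0 < R := by have := hup 0; simp at this; linarith
  obtain ⟨x, hxmem, hxmax⟩ := (isCompact_Icc (a := -R) (b := R)).exists_isMaxOn
    ⟨0, by constructor <;> linarith⟩ hfc.continuousOn
  have hglob : ∀ z, f z ≤ f x := by
    intro z
    rcases le_or_gt z R with hz1 | hz1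
    · rcases le_or_gt (-R) z with hz2 | hz2
      · exact hxmax ⟨hz2, hz1⟩
      · have h0 : f 0 ≤ f x := hxmax ⟨by linarith, by linarith⟩
        have := hdn z
        linarith
    · have h0 : f 0 ≤ f x := hxmax ⟨by linarith, by linarith⟩
      have := hup z
      linarith
  refine ⟨x, hglob, le_antisymm ?_ (psi_ub hψ x y)⟩
  exact (hψ y).2 (fun w hw => by obtain ⟨z, rfl⟩ := hw; exact hglob z)

lemma max_unique (hφ : StrictConvexOn ℝ Set.univ φ) {y x₁ x₂ : ℝ}
    (h₁ : ∀ z, z * y - φ z ≤ x₁ * y - φ x₁) (h₂ : ∀ z, z * y - φ z ≤ x₂ * y - φ x₂) :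
    x₁ = x₂ := by
  by_contra hne
  have heq : x₁ * y - φ x₁ = x₂ * y - φ x₂ := le_antisymm (h₂ x₁) (h₁ x₂)
  have hmid := hφ.2 (Set.mem_univ x₁) (Set.mem_univ x₂) hne
    (by norm_num : (0:ℝ) < 1/2) (by norm_num : (0:ℝ) < 1/2) (by norm_num)
  simp only [smul_eq_mul] at hmid
  have := h₁ (1/2 * x₁ + 1/2 * x₂)
  nlinarith

end Psi



section Window

variable {φ φp ψ s : ℝ → ℝ}
variable (hφ : StrictConvexOn ℝ Set.univ φ)
  (hp : ∀ x, Tendsto (fun t => (φ (x + t) - φ x) / t) (𝓝[>] 0) (𝓝 (φp x)))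
  (hsmax : ∀ y z, z * y - φ z ≤ s y * y - φ (s y))

include hφ hp hsmax

/-- preimage of a window under the argmax map is inside `[φp r, φp w]`. -/
lemma preimage_window_subset {r w : ℝ} (hrw : r < w) :
    s ⁻¹' (Set.Ioo r w) ⊆ Set.Icc (φp r) (φp w) := by
  intro y hy
  obtain ⟨h1, h2⟩ := hy
  constructor
  · -- φp r ≤ y
    have hs1 : (φ (s y) - φ r)/(s y - r) ≤ y := by
      have := hsmax y r
      rw [div_le_iff₀ (by linarith)]
      nlinarith
    exact le_trans (phip_le_slope hφ hp h1) hs1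
  · -- y ≤ φp w
    apply ge_of_tendsto (hp w)
    filter_upwards [self_mem_nhdsWithin] with t ht
    have ht' : (0:ℝ) < t := ht
    have hy1 : y ≤ (φ (w + t) - φ (s y))/(w + t - s y) := by
      have := hsmax y (w + t)
      rw [le_div_iff₀ (by linarith)]
      nlinarith
    have hy2 : (φ (w + t) - φ (s y))/(w + t - s y) ≤ (φ (w + t) - φ w)/(w + t - w) :=
      slope_right hφ h2 (by linarith)
    calc y ≤ _ := hy1
    _ ≤ _ := hy2
    _ = (φ (w + t) - φ w)/t := by norm_num

/-- flatness forces small increment of `φp` to the right of a rational. -/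
lemma flat_increment {u : ℕ → ℝ → ℝ}
    (hflat : ∀ (p : ℤ) (q : ℕ), 0 < q → Int.gcd p (q:ℤ) = 1 →
      ∀ x ∈ Set.Ioo ((p:ℝ)/(q:ℝ)) ((p:ℝ)/(q:ℝ) + 1/(4*(q:ℝ))),
        0 < φ x - φ ((p:ℝ)/(q:ℝ)) - φp ((p:ℝ)/(q:ℝ)) * (x - (p:ℝ)/(q:ℝ)) ∧
        φ x - φ ((p:ℝ)/(q:ℝ)) - φp ((p:ℝ)/(q:ℝ)) * (x - (p:ℝ)/(q:ℝ))
          < u q (x - (p:ℝ)/(q:ℝ)))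
    (p : ℤ) (q : ℕ) (hq : 0 < q) (hcop : Int.gcd p (q:ℤ) = 1)
    {t : ℝ} (ht : 0 < t) (ht4 : t < 1/(4*(q:ℝ)))
    : φp ((p:ℝ)/(q:ℝ) + t/2) - φp ((p:ℝ)/(q:ℝ)) ≤ 2 * u q t / t := by
  set r := (p:ℝ)/(q:ℝ)
  have hx : r + t ∈ Set.Ioo r (r + 1/(4*(q:ℝ))) := ⟨by linarith, by linarith⟩
  have hflat' := (hflat p q hq hcop (r + t) hx).2
  rw [show r + t - r = t by ring] at hflat'
  -- two subgradient inequalities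
  have h1 : φ (r + t/2) + φp (r + t/2) * (t/2) ≤ φ (r + t) := by
    have h := subgrad hφ hp (x := r + t/2) (z := r + t)
    rw [show r + t - (r + t/2) = t/2 by ring] at h
    exact h
  have h2 : φ r + φp r * (t/2) ≤ φ (r + t/2) := by
    have h := subgrad hφ hp (x := r) (z := r + t/2)
    rw [show r + t/2 - r = t/2 by ring] at h
    exact h
  rw [le_div_iff₀ ht]
  nlinarith

end Window


end Stmt7Aux
theorem stmt7 (φ φp ψ : ℝ → ℝ) (hφ : StrictConvexOn ℝ Set.univ φ)
    (hp : ∀ x, Tendsto (fun t => (φ (x + t) - φ x) / t) (𝓝[>] 0) (𝓝 (φp x)))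
    (ν : ℝ) (hν : ν ∈ Set.Ioo (0:ℝ) 1) (u : ℕ → ℝ → ℝ)
    (hu_pos : ∀ q x, 0 < x → 0 < u q x)
    (hflat : ∀ (p : ℤ) (q : ℕ), 0 < q → Int.gcd p (q:ℤ) = 1 →
      ∀ x ∈ Set.Ioo ((p:ℝ)/(q:ℝ)) ((p:ℝ)/(q:ℝ) + 1/(4*(q:ℝ))),
        0 < φ x - φ ((p:ℝ)/(q:ℝ)) - φp ((p:ℝ)/(q:ℝ)) * (x - (p:ℝ)/(q:ℝ)) ∧
        φ x - φ ((p:ℝ)/(q:ℝ)) - φp ((p:ℝ)/(q:ℝ)) * (x - (p:ℝ)/(q:ℝ))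
          < u q (x - (p:ℝ)/(q:ℝ)))
    (hsum : Summable (fun q : ℕ => (q:ℝ)^((2:ℝ)+ν) * u q (1/(q:ℝ)^((1:ℝ)+ν))))
    (hψ : ∀ y, IsLUB {z | ∃ x, z = x * y - φ x} (ψ y)) :
    Differentiable ℝ ψ ∧ Continuous (deriv ψ) ∧
    (∃ y₁ y₂, deriv ψ y₁ ≠ deriv ψ y₂) ∧
    (∀ᵐ y ∂(volume : Measure ℝ), HasDerivAt (deriv ψ) 0 y) := by
  classical
  obtain ⟨hν0, hν1⟩ := hν
  choose s hsmax hsval using Stmt7Aux.exists_max hφ hψ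
  -- s ∘ φp = id
  have hsphip : ∀ x, s (φp x) = x := by
    intro x
    refine Stmt7Aux.max_unique hφ (hsmax (φp x)) ?_
    intro z
    have := Stmt7Aux.subgrad hφ hp (x := x) (z := z)
    nlinarith
  -- monotonicity of s
  have hsmono : Monotone s := by
    intro y1 y2 h12
    rcases eq_or_lt_of_le h12 with rfl | hlt
    · exact le_refl _
    by_contra hcon
    push_neg at hcon
    have A := hsmax y1 (s y2)
    have B := hsmax y2 (s y1)
    nlinarith
  have hssurj : Function.Surjective s := fun x => ⟨φp x, hsphip x⟩
  have hscont : Continuous s := Monotone.continuous_of_surjective hsmono hssurj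
  -- ψ is differentiable with derivative s
  have hderiv : ∀ y, HasDerivAt ψ (s y) y := by
    intro y
    rw [hasDerivAt_iff_tendsto_slope, ← tendsto_sub_nhds_zero_iff]
    have hg : Tendsto (fun z => |s z - s y|) (𝓝[≠] y) (𝓝 0) := by
      have : Tendsto (fun z => |s z - s y|) (𝓝 y) (𝓝 |s y - s y|) :=
        ((hscont.tendsto y).sub tendsto_const_nhds).abs
      simpa using this.mono_left nhdsWithin_le_nhds
    apply squeeze_zero_norm' _ hg
    filter_upwards [self_mem_nhdsWithin] with z hz
    have hz' : z ≠ y := hz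
    have hA : s y * z - φ (s y) ≤ ψ z := Stmt7Aux.psi_ub hψ (s y) z
    have hB : s z * y - φ (s z) ≤ ψ y := Stmt7Aux.psi_ub hψ (s z) y
    have hvy := hsval y
    have hvz := hsval z
    rw [Real.norm_eq_abs, slope_def_field]
    rcases lt_or_gt_of_ne hz' with h | h
    · -- z < y
      have hsz : s z ≤ s y := hsmono h.le
      have hup : (ψ z - ψ y)/(z - y) ≤ s y := by
        rw [div_le_iff_of_neg (by linarith)]
        nlinarith
      have hdn : s z ≤ (ψ z - ψ y)/(z - y) := by
        rw [le_div_iff_of_neg (by linarith)]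
        nlinarith
      rw [abs_of_nonpos (by linarith), abs_of_nonpos (by linarith)]
      linarith
    · -- y < z
      have hsz : s y ≤ s z := hsmono h.le
      have hup : (ψ z - ψ y)/(z - y) ≤ s z := by
        rw [div_le_iff₀ (by linarith)]
        nlinarith
      have hdn : s y ≤ (ψ z - ψ y)/(z - y) := by
        rw [le_div_iff₀ (by linarith)]
        nlinarith
      rw [abs_of_nonneg (by linarith), abs_of_nonneg (by linarith)]
      linarith
  have hderiv_eq : deriv ψ = s := funext fun y => (hderiv y).deriv
  refine ⟨fun y => (hderiv y).differentiableAt, ?_, ?_, ?_⟩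
  · rw [hderiv_eq]; exact hscont
  · exact ⟨φp 0, φp 1, by rw [hderiv_eq, hsphip 0, hsphip 1]; norm_num⟩
  -- Part 4: the Stieltjes measure of s is singular w.r.t. Lebesgue measure
  set S : StieltjesFunction ℝ :=
    ⟨s, hsmono, fun x => (hscont.continuousAt (x := x)).continuousWithinAt⟩ with hS
  set t0 : ℕ → ℝ := fun q => 1/(q:ℝ)^((1:ℝ)+ν) with ht0d
  set W : ℤ → ℕ → Set ℝ :=
    fun p q => Ioo ((p:ℝ)/(q:ℝ)) ((p:ℝ)/(q:ℝ) + t0 q / 2) with hWd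
  set T : Set ℝ := ⋂ (Q : ℕ), ⋃ (q : ℕ),
      ⋃ (_ : Q ≤ q ∧ 4 < (q:ℝ)^ν ∧ 2 ≤ (q:ℝ)^((1:ℝ)-ν)), ⋃ (p : ℤ),
      ⋃ (_ : Int.gcd p (q:ℤ) = 1), W p q with hTd
  have hTmeas : MeasurableSet T := by
    refine MeasurableSet.iInter fun Q => MeasurableSet.iUnion fun q =>
      MeasurableSet.iUnion fun _ => MeasurableSet.iUnion fun p =>
      MeasurableSet.iUnion fun _ => measurableSet_Ioo
  -- every irrational number belongs to T
  have hcov : ∀ x : ℝ, Irrational x → x ∈ T := by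
    intro x hx
    have hT1 : Tendsto (fun q : ℕ => ((q:ℝ))^ν) atTop atTop :=
      (tendsto_rpow_atTop hν0).comp tendsto_natCast_atTop_atTop
    have hT2 : Tendsto (fun q : ℕ => ((q:ℝ))^((1:ℝ)-ν)) atTop atTop :=
      (tendsto_rpow_atTop (by linarith)).comp tendsto_natCast_atTop_atTop
    obtain ⟨N₀, hN₀⟩ := eventually_atTop.mp
      ((hT1.eventually_gt_atTop 4).and (hT2.eventually_ge_atTop 2))
    rw [hTd, mem_iInter]
    intro Q
    obtain ⟨p, q, hqN, hq0, hcop, hx1, hx2⟩ :=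
      Stmt7Aux.exists_good_approx hx (max Q N₀)
    have hq0' : (0:ℝ) < q := by exact_mod_cast hq0
    have hcond := hN₀ q (le_trans (le_max_right _ _) hqN)
    refine mem_iUnion.2 ⟨q, mem_iUnion.2 ⟨⟨le_trans (le_max_left _ _) hqN,
      hcond.1, hcond.2⟩, mem_iUnion.2 ⟨p, mem_iUnion.2 ⟨hcop, ?_⟩⟩⟩⟩
    refine ⟨by linarith, ?_⟩
    -- x < p/q + (t0 q)/2 since x - p/q < 1/q² ≤ (t0 q)/2
    have hqsq : ((q:ℝ))*(q:ℝ) = (q:ℝ)^((1:ℝ)+ν) * (q:ℝ)^((1:ℝ)-ν) := by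
      rw [← Real.rpow_add hq0']
      have h2 : ((1:ℝ)+ν) + ((1:ℝ)-ν) = 2 := by ring
      rw [h2, show ((2:ℝ)) = ((2:ℕ):ℝ) by norm_num, Real.rpow_natCast]
      ring
    have hpow : (0:ℝ) < (q:ℝ)^((1:ℝ)+ν) := Real.rpow_pos_of_pos hq0' _
    have hkey : 1/((q:ℝ)*(q:ℝ)) ≤ t0 q / 2 := by
      rw [ht0d]
      simp only
      rw [div_div, div_le_div_iff₀ (by positivity) (by positivity), one_mul, one_mul, hqsq]
      have := hcond.2
      nlinarith
    have : x - (p:ℝ)/(q:ℝ) < t0 q / 2 := lt_of_lt_of_le hx2 hkey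
    linarith
  -- S.measure vanishes on the preimage of the complement of T
  have hpoint : ∀ v : ℝ, S.measure (s ⁻¹' {v}) = 0 := by
    intro v
    rcases eq_empty_or_nonempty (s ⁻¹' {v}) with he | hne
    · rw [he]; simp
    · have hcl : IsClosed (s ⁻¹' {v}) := isClosed_singleton.preimage hscont
      have hbb : BddBelow (s ⁻¹' {v}) := by
        obtain ⟨y', hy'⟩ := hssurj (v - 1)
        refine ⟨y', fun y hy => ?_⟩
        by_contra hlt
        push_neg at hlt
        have h1 := hsmono hlt.le
        rw [hy', (mem_preimage.1 hy : s y = v)] at h1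
        linarith
      have hba : BddAbove (s ⁻¹' {v}) := by
        obtain ⟨y', hy'⟩ := hssurj (v + 1)
        refine ⟨y', fun y hy => ?_⟩
        by_contra hlt
        push_neg at hlt
        have h1 := hsmono hlt.le
        rw [hy', (mem_preimage.1 hy : s y = v)] at h1
        linarith
      have hainf : sInf (s ⁻¹' {v}) ∈ s ⁻¹' {v} := hcl.csInf_mem hne hbb
      have hasup : sSup (s ⁻¹' {v}) ∈ s ⁻¹' {v} := hcl.csSup_mem hne hba
      have hsub : s ⁻¹' {v} ⊆ Icc (sInf (s ⁻¹' {v})) (sSup (s ⁻¹' {v})) :=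
        fun y hy => ⟨csInf_le hbb hy, le_csSup hba hy⟩
      refine measure_mono_null hsub ?_
      rw [S.measure_Icc]
      have hll : Function.leftLim s (sInf (s ⁻¹' {v})) = s (sInf (s ⁻¹' {v})) :=
        leftLim_eq_of_tendsto
          ((hscont.tendsto _).mono_left nhdsWithin_le_nhds)
      have h1 : s (sInf (s ⁻¹' {v})) = v := hainf
      have h2 : s (sSup (s ⁻¹' {v})) = v := hasup
      show ENNReal.ofReal (s _ - Function.leftLim s _) = 0
      rw [hll, h1, h2]
      simp
  have hSmeas0 : S.measure (s ⁻¹' Tᶜ) = 0 := by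
    have hsub : s ⁻¹' Tᶜ ⊆ ⋃ (r : ℚ), s ⁻¹' {(r : ℝ)} := by
      intro y hy
      have : ¬ Irrational (s y) := fun hirr => hy (hcov _ hirr)
      rw [Irrational] at this
      push_neg at this
      obtain ⟨r, hr⟩ := not_not.1 (by simpa [Irrational] using this)
      exact mem_iUnion.2 ⟨r, by simp [hr]⟩
    exact measure_mono_null hsub (measure_iUnion_null fun r => hpoint _)
  -- per-window measure bound
  have hwinb : ∀ q : ℕ, 4 < (q:ℝ)^ν → ∀ p : ℤ, Int.gcd p (q:ℤ) = 1 →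
      volume (s ⁻¹' (W p q)) ≤ ENNReal.ofReal (2 * u q (t0 q) / t0 q) := by
    intro q hq4 p hcop
    have hq0 : 0 < q := by
      rcases Nat.eq_zero_or_pos q with rfl | h
      · rw [Nat.cast_zero, Real.zero_rpow (ne_of_gt hν0)] at hq4; norm_num at hq4
      · exact h
    have hq0' : (0:ℝ) < q := by exact_mod_cast hq0
    have hpow : (0:ℝ) < (q:ℝ)^((1:ℝ)+ν) := Real.rpow_pos_of_pos hq0' _
    have ht0pos : 0 < t0 q := by rw [ht0d]; positivity
    have ht4 : t0 q < 1/(4*(q:ℝ)) := by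
      rw [ht0d]
      simp only
      rw [div_lt_div_iff₀ (by positivity) (by positivity), one_mul, one_mul]
      have hsplit : (q:ℝ)^((1:ℝ)+ν) = (q:ℝ) * (q:ℝ)^ν := by
        rw [Real.rpow_add hq0', Real.rpow_one]
      rw [hsplit]
      nlinarith
    have hsubset : s ⁻¹' (W p q) ⊆
        Icc (φp ((p:ℝ)/(q:ℝ))) (φp ((p:ℝ)/(q:ℝ) + t0 q / 2)) :=
      Stmt7Aux.preimage_window_subset hφ hp hsmax (by linarith)
    calc volume (s ⁻¹' (W p q)) ≤ volume (Icc (φp ((p:ℝ)/(q:ℝ))) (φp ((p:ℝ)/(q:ℝ) + t0 q / 2))) :=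
          measure_mono hsubset
    _ = ENNReal.ofReal (φp ((p:ℝ)/(q:ℝ) + t0 q / 2) - φp ((p:ℝ)/(q:ℝ))) := Real.volume_Icc
    _ ≤ _ := ENNReal.ofReal_le_ofReal
          (Stmt7Aux.flat_increment hφ hp hsmax hflat p q hq0 hcop ht0pos ht4)
  -- the preimage of T is Lebesgue-null
  have hmeas0 : volume (s ⁻¹' T) = 0 := by
    have hcover : s ⁻¹' T ⊆ ⋃ (n : ℕ), (s ⁻¹' T ∩ Icc (-(n:ℝ)) (n:ℝ)) := by
      intro y hy
      obtain ⟨n, hn⟩ := exists_nat_ge |y|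
      exact mem_iUnion.2 ⟨n, hy, (abs_le.1 hn).1, (abs_le.1 hn).2⟩
    refine measure_mono_null hcover (measure_iUnion_null fun n => ?_)
    set K : ℝ := s (n:ℝ) - s (-(n:ℝ)) + 2 with hKd
    have hK2 : 2 ≤ K := by
      have := hsmono (show -(n:ℝ) ≤ (n:ℝ) by
        have : (0:ℝ) ≤ n := Nat.cast_nonneg n
        linarith)
      rw [hKd]
      linarith
    set c : ℕ → ℝ := fun q => (q:ℝ)^((2:ℝ)+ν) * u q (t0 q) with hcd
    have hcnonneg : ∀ q, 0 ≤ c q := by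
      intro q
      rcases Nat.eq_zero_or_pos q with rfl | hq
      · rw [hcd]
        simp only [Nat.cast_zero]
        rw [Real.zero_rpow (by positivity)]
        simp
      · have hq' : (0:ℝ) < q := by exact_mod_cast hq
        have ht : 0 < t0 q := by rw [ht0d]; positivity
        exact le_of_lt (mul_pos (Real.rpow_pos_of_pos hq' _) (hu_pos q _ ht))
    set g : ℕ → ENNReal := fun q => ENNReal.ofReal (2 * K * c q) with hgd
    have hsummable : Summable (fun q => 2 * K * c q) := by
      have hc : Summable c := hsum
      exact hc.mul_left _
    have hgsum : ∑' q, g q ≠ (⊤ : ENNReal) := by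
      rw [hgd, ← ENNReal.ofReal_tsum_of_nonneg
        (fun q => mul_nonneg (by linarith) (hcnonneg q)) hsummable]
      exact ENNReal.ofReal_ne_top
    have hbound : ∀ Q : ℕ, volume (s ⁻¹' T ∩ Icc (-(n:ℝ)) (n:ℝ)) ≤ ∑' k, g (k + Q) := by
      intro Q
      have hsub : s ⁻¹' T ∩ Icc (-(n:ℝ)) (n:ℝ) ⊆
          ⋃ (k : ℕ), ((⋃ (_ : 4 < ((k+Q:ℕ):ℝ)^ν), ⋃ (p : ℤ),
            ⋃ (_ : Int.gcd p ((k+Q:ℕ):ℤ) = 1), s ⁻¹' (W p (k+Q))) ∩ Icc (-(n:ℝ)) (n:ℝ)) := by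
        rintro y ⟨hyT, hyI⟩
        have hyT' : s y ∈ T := hyT
        rw [hTd] at hyT'
        have hmem := mem_iInter.1 hyT' Q
        simp only [mem_iUnion] at hmem
        obtain ⟨q, hcond, p, hcop, hw⟩ := hmem
        refine mem_iUnion.2 ⟨q - Q, ?_⟩
        have hkq : q - Q + Q = q := by omega
        rw [hkq]
        exact ⟨mem_iUnion.2 ⟨hcond.2.1, mem_iUnion.2 ⟨p, mem_iUnion.2 ⟨hcop, hw⟩⟩⟩, hyI⟩
      refine le_trans (measure_mono hsub)
        (le_trans (measure_iUnion_le _) (ENNReal.tsum_le_tsum fun k => ?_))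
      by_cases hq4 : 4 < ((k+Q:ℕ):ℝ)^ν
      · -- the real estimate at level q = k + Q
        set q : ℕ := k + Q with hqd
        have hq0 : 0 < q := by
          rcases Nat.eq_zero_or_pos q with hq | h
          · rw [hq] at hq4
            norm_num [Real.zero_rpow (ne_of_gt hν0)] at hq4
          · exact h
        have hq0' : (0:ℝ) < q := by exact_mod_cast hq0
        have hq1 : (1:ℝ) ≤ q := by exact_mod_cast hq0
        have hpow : (0:ℝ) < (q:ℝ)^((1:ℝ)+ν) := Real.rpow_pos_of_pos hq0' _
        have ht0pos : 0 < t0 q := by rw [ht0d]; positivity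
        have ht0le1 : t0 q ≤ 1 := by
          rw [ht0d]
          simp only
          rw [div_le_one (by positivity)]
          calc (1:ℝ) = (q:ℝ)^(0:ℝ) := (Real.rpow_zero _).symm
          _ ≤ (q:ℝ)^((1:ℝ)+ν) := Real.rpow_le_rpow_of_exponent_le hq1 (by linarith)
        set lo : ℤ := ⌈(s (-(n:ℝ)) - 1) * q⌉ with hlod
        set hi : ℤ := ⌊s (n:ℝ) * q⌋ with hhid
        have hsub2 : (⋃ (_ : 4 < ((q:ℕ):ℝ)^ν), ⋃ (p : ℤ),
              ⋃ (_ : Int.gcd p (q:ℤ) = 1), s ⁻¹' (W p q)) ∩ Icc (-(n:ℝ)) (n:ℝ)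
            ⊆ ⋃ (p : ℤ) (_ : p ∈ Finset.Icc lo hi),
                (⋃ (_ : Int.gcd p (q:ℤ) = 1), s ⁻¹' (W p q)) := by
          rintro y ⟨hy1, hy2⟩
          simp only [mem_iUnion] at hy1
          obtain ⟨_, p, hcop, hw⟩ := hy1
          have hw' : s y ∈ Ioo ((p:ℝ)/(q:ℝ)) ((p:ℝ)/(q:ℝ) + t0 q/2) := hw
          have hsy1 : s y ≤ s (n:ℝ) := hsmono hy2.2
          have hsy2 : s (-(n:ℝ)) ≤ s y := hsmono hy2.1
          have hp_hi : p ≤ hi := by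
            rw [hhid]
            apply Int.le_floor.2
            have h1 : (p:ℝ)/q < s (n:ℝ) := lt_of_lt_of_le hw'.1 hsy1
            rw [div_lt_iff₀ hq0'] at h1
            linarith
          have hp_lo : lo ≤ p := by
            rw [hlod]
            apply Int.ceil_le.2
            have h1 : s y < (p:ℝ)/q + t0 q/2 := hw'.2
            have h2 : s (-(n:ℝ)) - 1 < (p:ℝ)/q := by linarith
            rw [lt_div_iff₀ hq0'] at h2
            linarith
          exact mem_iUnion.2 ⟨p, mem_iUnion.2 ⟨Finset.mem_Icc.2 ⟨hp_lo, hp_hi⟩,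
            mem_iUnion.2 ⟨hcop, hw⟩⟩⟩
        refine le_trans (measure_mono hsub2) (le_trans (measure_biUnion_finset_le _ _) ?_)
        have hterm : ∀ p ∈ Finset.Icc lo hi,
            volume (⋃ (_ : Int.gcd p (q:ℤ) = 1), s ⁻¹' (W p q))
              ≤ ENNReal.ofReal (2 * u q (t0 q) / t0 q) := by
          intro p _
          by_cases hcop : Int.gcd p (q:ℤ) = 1
          · exact le_trans (measure_mono (Set.iUnion_subset fun _ => Set.Subset.refl _))
              (hwinb q hq4 p hcop)
          · simp [hcop]
        refine le_trans (Finset.sum_le_card_nsmul _ _ _ hterm) ?_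
        rw [nsmul_eq_mul]
        have hcard : (((Finset.Icc lo hi).card : ℕ) : ℝ) ≤ K * q := by
          rw [Int.card_Icc]
          rcases le_or_gt (hi + 1 - lo) 0 with hle | hgt
          · rw [Int.toNat_of_nonpos hle]
            simp only [Nat.cast_zero]
            nlinarith
          · have heq : (((hi + 1 - lo).toNat : ℕ) : ℝ) = ((hi:ℝ) + 1 - (lo:ℝ)) := by
              rw [← Int.cast_natCast, Int.toNat_of_nonneg (le_of_lt hgt)]
              push_cast
              ring
            rw [heq]
            have hfl : (hi:ℝ) ≤ s (n:ℝ) * q := by rw [hhid]; exact Int.floor_le _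
            have hcl : (s (-(n:ℝ)) - 1) * q ≤ (lo:ℝ) := by rw [hlod]; exact Int.le_ceil _
            rw [hKd]
            nlinarith
        calc ((Finset.Icc lo hi).card : ENNReal) * ENNReal.ofReal (2 * u q (t0 q) / t0 q)
            ≤ ENNReal.ofReal (K * q) * ENNReal.ofReal (2 * u q (t0 q) / t0 q) := by
              apply mul_le_mul' ?_ le_rfl
              rw [← ENNReal.ofReal_natCast]
              exact ENNReal.ofReal_le_ofReal hcard
        _ = ENNReal.ofReal (K * q * (2 * u q (t0 q) / t0 q)) :=
              (ENNReal.ofReal_mul (by positivity)).symm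
        _ = g q := by
              rw [hgd]
              congr 1
              rw [hcd, ht0d]
              simp only
              have hsplit : (q:ℝ)^((2:ℝ)+ν) = (q:ℝ) * (q:ℝ)^((1:ℝ)+ν) := by
                rw [show (2:ℝ)+ν = 1 + (1+ν) by ring, Real.rpow_add hq0', Real.rpow_one]
              rw [hsplit]
              field_simp
      · -- the level is empty
        have hempty : (⋃ (_ : 4 < ((k+Q:ℕ):ℝ)^ν), ⋃ (p : ℤ),
            ⋃ (_ : Int.gcd p ((k+Q:ℕ):ℤ) = 1), s ⁻¹' (W p (k+Q))) = ∅ := by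
          ext z
          simp only [mem_iUnion, mem_empty_iff_false, iff_false, not_exists]
          intro h4
          exact absurd h4 hq4
        rw [hempty]
        simp
    have htail := ENNReal.tendsto_sum_nat_add g hgsum
    have hle : volume (s ⁻¹' T ∩ Icc (-(n:ℝ)) (n:ℝ)) ≤ 0 := ge_of_tendsto' htail hbound
    exact le_antisymm hle zero_le
  -- conclude: the Stieltjes measure of s is mutually singular with volume
  have hsing : S.measure ⟂ₘ (volume : Measure ℝ) := by
    refine ⟨s ⁻¹' Tᶜ, (hTmeas.compl).preimage hscont.measurable, hSmeas0, ?_⟩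
    rw [Set.preimage_compl, compl_compl]
    exact hmeas0
  have hrn : S.measure.rnDeriv volume =ᵐ[volume] 0 :=
    (Measure.rnDeriv_eq_zero _ _).mpr hsing
  filter_upwards [S.ae_hasDerivAt, hrn] with y h1 h2
  rw [hderiv_eq]
  have h3 : (S.measure.rnDeriv volume y).toReal = 0 := by
    rw [h2]
    simp
  rw [h3] at h1
  exact h1
end

section
/- Under the hypotheses of Aubry's lemma (strict convexity and the flatness bounds u_q with ∑_q q^{2+ν} u_q(1/q^{1+ν}) < ∞), if additionally q^{1+ν} u_q(2/q^{1+ν}) → 0 as q → ∞ and ∑_{q=1}^∞ q^{(1+ν)θ + 1} u_q^θ(1/q^{1+ν}) < ∞ for all θ ∈ (0,1], then the set Y = {y : D²ψ(y) does not exist} has Hausdorff dimension zero, where ψ is the convex conjugate of φ. -/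
open Filter Set Topology MeasureTheory
open scoped ENNReal NNReal


section Aux
variable {φ φp : ℝ → ℝ}

lemma phi_cont (hφ : StrictConvexOn ℝ Set.univ φ) : Continuous φ := by
  have h := (hφ.convexOn.continuousOn_interior)
  rw [interior_univ] at h
  exact continuousOn_univ.1 h

lemma A1 (hφ : StrictConvexOn ℝ Set.univ φ)
    (hp : ∀ x, Tendsto (fun t => (φ (x + t) - φ x) / t) (𝓝[>] 0) (𝓝 (φp x)))
    {x y : ℝ} (hxy : x < y) : φp x ≤ (φ y - φ x) / (y - x) := by
  refine le_of_tendsto (hp x) ?_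
  have hmem : Ioo (0:ℝ) (y - x) ∈ 𝓝[>] (0:ℝ) :=
    Ioo_mem_nhdsGT_of_mem ⟨le_refl 0, sub_pos.2 hxy⟩
  filter_upwards [hmem] with t ht
  have := hφ.convexOn.secant_mono (a := x) (x := x + t) (y := y)
    (mem_univ _) (mem_univ _) (mem_univ _)
    (by
      have h1 := ht.1
      intro h
      simp only [add_eq_left] at h
      exact absurd h (ne_of_gt h1)) (ne_of_gt hxy)
    (by linarith [ht.2])
  simpa [add_sub_cancel_left] using this

lemma A2 (hφ : StrictConvexOn ℝ Set.univ φ)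
    (hp : ∀ x, Tendsto (fun t => (φ (x + t) - φ x) / t) (𝓝[>] 0) (𝓝 (φp x)))
    {x y : ℝ} (hxy : x < y) : (φ y - φ x) / (y - x) ≤ φp y := by
  refine ge_of_tendsto (hp y) ?_
  filter_upwards [self_mem_nhdsWithin] with t (ht : 0 < t)
  have := hφ.convexOn.slope_mono_adjacent (mem_univ x) (mem_univ (y + t)) hxy
    (by linarith : y < y + t)
  simpa [add_sub_cancel_left] using this

lemma A3 (hφ : StrictConvexOn ℝ Set.univ φ)
    (hp : ∀ x, Tendsto (fun t => (φ (x + t) - φ x) / t) (𝓝[>] 0) (𝓝 (φp x)))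
    {x y : ℝ} (hxy : x < y) : φp x < φp y := by
  set m := (x + y) / 2 with hm
  have hxm : x < m := by rw [hm]; linarith
  have hmy : m < y := by rw [hm]; linarith
  have h1 := A1 hφ hp hxm
  have h2 := hφ.slope_strict_mono_adjacent (mem_univ x) (mem_univ y) hxm hmy
  have h3 := A2 hφ hp hmy
  linarith

lemma A3m (hφ : StrictConvexOn ℝ Set.univ φ)
    (hp : ∀ x, Tendsto (fun t => (φ (x + t) - φ x) / t) (𝓝[>] 0) (𝓝 (φp x)))
    {x y : ℝ} (hxy : x ≤ y) : φp x ≤ φp y := by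
  rcases eq_or_lt_of_le hxy with rfl | h
  · exact le_refl _
  · exact (A3 hφ hp h).le

lemma A4 (hφ : StrictConvexOn ℝ Set.univ φ)
    (hp : ∀ x, Tendsto (fun t => (φ (x + t) - φ x) / t) (𝓝[>] 0) (𝓝 (φp x)))
    (x y : ℝ) : φ x + φp x * (y - x) ≤ φ y := by
  rcases lt_trichotomy x y with h | rfl | h
  · have h1 := A1 hφ hp h
    have h' : 0 < y - x := sub_pos.2 h
    rw [le_div_iff₀ h'] at h1
    linarith
  · simp
  · have h1 := A2 hφ hp h
    have h' : 0 < x - y := sub_pos.2 h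
    rw [div_le_iff₀ h'] at h1
    linarith

end Aux

section Aux2
variable {φ φp ψ : ℝ → ℝ}

lemma A6 (hφ : StrictConvexOn ℝ Set.univ φ)
    (hp : ∀ x, Tendsto (fun t => (φ (x + t) - φ x) / t) (𝓝[>] 0) (𝓝 (φp x)))
    (x : ℝ) {ε : ℝ} (hε : 0 < ε) : ∃ t > 0, φp (x + t) < φp x + ε := by
  -- first find s > 0 with slope < φp x + ε/2
  have h1 : ∀ᶠ s in 𝓝[>] (0:ℝ), (φ (x + s) - φ x) / s < φp x + ε/2 :=
    (hp x).eventually_lt_const (by linarith)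
  obtain ⟨s, hs1, hs2⟩ : ∃ s, 0 < s ∧ (φ (x + s) - φ x) / s < φp x + ε/2 := by
    rcases (h1.and self_mem_nhdsWithin).exists with ⟨s, h, hs⟩
    exact ⟨s, hs, h⟩
  -- continuity in t of (φ (x+s) - φ (x+t)) / (s - t) at t = 0
  have hcont : ContinuousAt (fun t => (φ (x + s) - φ (x + t)) / (s - t)) 0 := by
    apply ContinuousAt.div
    · exact (continuous_const.sub ((phi_cont hφ).comp (continuous_const.add continuous_id))).continuousAt
    · exact (continuous_const.sub continuous_id).continuousAt
    · simpa using ne_of_gt hs1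
  have h0 : (φ (x + s) - φ (x + 0)) / (s - 0) < φp x + ε := by
    simpa using lt_of_lt_of_le hs2 (by linarith)
  have h2 : ∀ᶠ t in 𝓝 (0:ℝ), (φ (x + s) - φ (x + t)) / (s - t) < φp x + ε := by
    have := hcont.eventually_lt_const (by simpa using h0)
    simpa using this
  have h3 : ∀ᶠ t in 𝓝[>] (0:ℝ), ((φ (x + s) - φ (x + t)) / (s - t) < φp x + ε ∧ t ∈ Ioo 0 s) := by
    refine (h2.filter_mono nhdsWithin_le_nhds).and ?_
    exact Ioo_mem_nhdsGT_of_mem ⟨le_refl 0, hs1⟩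
  rcases h3.exists with ⟨t, ht1, ht2⟩
  refine ⟨t, ht2.1, ?_⟩
  have hA : φp (x + t) ≤ (φ (x + s) - φ (x + t)) / (s - t) := by
    have := A1 hφ hp (x := x + t) (y := x + s) (by linarith [ht2.2])
    have he : x + s - (x + t) = s - t := by ring
    rwa [he] at this
  linarith

lemma plateau (hφ : StrictConvexOn ℝ Set.univ φ)
    (hp : ∀ x, Tendsto (fun t => (φ (x + t) - φ x) / t) (𝓝[>] 0) (𝓝 (φp x)))
    (hψ : ∀ y, IsLUB {z | ∃ x, z = x * y - φ x} (ψ y))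
    {r y : ℝ} (h1 : ∀ x, x < r → φp x ≤ y) (h2 : y ≤ φp r) :
    ψ y = r * y - φ r := by
  have hub : ∀ x : ℝ, x * y - φ x ≤ r * y - φ r := by
    intro x
    rcases lt_trichotomy x r with h | rfl | h
    · -- φ r ≤ φ x + y * (r - x)
      have key : φ r ≤ φ x + y * (r - x) := by
        have hev : ∀ x'' ∈ Ioo x r, φ x'' ≤ φ x + y * (x'' - x) := by
          intro x'' hx''
          have hs := A2 hφ hp (x := x) (y := x'') hx''.1
          have hy := h1 x'' hx''.2
          have hpos : 0 < x'' - x := sub_pos.2 hx''.1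
          rw [div_le_iff₀ hpos] at hs
          nlinarith [mul_le_mul_of_nonneg_right hy (le_of_lt hpos)]
        have ht1 : Tendsto (fun x'' => φ x'') (𝓝[<] r) (𝓝 (φ r)) :=
          ((phi_cont hφ).tendsto r).mono_left nhdsWithin_le_nhds
        have ht2 : Tendsto (fun x'' => φ x + y * (x'' - x)) (𝓝[<] r) (𝓝 (φ x + y * (r - x))) := by
          apply Tendsto.mono_left _ nhdsWithin_le_nhds
          exact (tendsto_const_nhds.add (tendsto_const_nhds.mul ((continuous_id.sub continuous_const).tendsto r)))
        refine le_of_tendsto_of_tendsto ht1 ht2 ?_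
        filter_upwards [Ioo_mem_nhdsLT_of_mem (⟨h, le_refl r⟩ : r ∈ Ioc x r)] with z hz
        exact hev z hz
      nlinarith
    · exact le_refl _
    · have h4 := A4 hφ hp r x
      have h5 : y * (x - r) ≤ φp r * (x - r) :=
        mul_le_mul_of_nonneg_right h2 (by linarith)
      nlinarith
  have hmem : r * y - φ r ∈ {z | ∃ x, z = x * y - φ x} := ⟨r, rfl⟩
  refine le_antisymm ((hψ y).2 ?_) ((hψ y).1 hmem)
  rintro z ⟨x, hx⟩
  exact hx ▸ hub x

lemma good_point (hφ : StrictConvexOn ℝ Set.univ φ)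
    (hp : ∀ x, Tendsto (fun t => (φ (x + t) - φ x) / t) (𝓝[>] 0) (𝓝 (φp x)))
    (hψ : ∀ y, IsLUB {z | ∃ x, z = x * y - φ x} (ψ y))
    {r y : ℝ} (hL : sSup (φp '' Iio r) < y) (hR : y < φp r) :
    ∃ d, HasDerivAt (deriv ψ) d y := by
  have hbdd : BddAbove (φp '' Iio r) := by
    refine ⟨φp r, ?_⟩
    rintro z ⟨x, hx, rfl⟩
    exact (A3 hφ hp hx).le
  have haff : ∀ y' ∈ Ioo (sSup (φp '' Iio r)) (φp r), ψ y' = r * y' - φ r := by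
    intro y' hy'
    refine plateau hφ hp hψ (fun x hx => ?_) hy'.2.le
    exact le_trans (le_csSup hbdd ⟨x, hx, rfl⟩) hy'.1.le
  have hderiv : ∀ y' ∈ Ioo (sSup (φp '' Iio r)) (φp r), deriv ψ y' = r := by
    intro y' hy'
    have heq : ψ =ᶠ[𝓝 y'] (fun z => r * z - φ r) := by
      filter_upwards [Ioo_mem_nhds hy'.1 hy'.2] with z hz
      exact haff z hz
    rw [heq.deriv_eq]
    have : HasDerivAt (fun z => r * z - φ r) (r * 1) y' := ((hasDerivAt_id y').const_mul r).sub_const (φ r)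
    simpa using this.deriv
  have heq2 : deriv ψ =ᶠ[𝓝 y] (fun _ => r) := by
    filter_upwards [Ioo_mem_nhds hL hR] with z hz
    exact hderiv z hz
  exact ⟨0, (hasDerivAt_const y r).congr_of_eventuallyEq heq2⟩

lemma unbdd_above (hφ : StrictConvexOn ℝ Set.univ φ)
    (hp : ∀ x, Tendsto (fun t => (φ (x + t) - φ x) / t) (𝓝[>] 0) (𝓝 (φp x)))
    (hψ : ∀ y, IsLUB {z | ∃ x, z = x * y - φ x} (ψ y))
    (y : ℝ) : ∃ x, y < φp x := by
  by_contra hc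
  push_neg at hc
  set y' := y + 1 with hy'
  have hg : ∀ n : ℕ, (0:ℝ) * y' - φ 0 + n ≤ (n:ℝ) * y' - φ (n:ℝ) := by
    intro n
    induction n with
    | zero => simp
    | succ n ih =>
      have hs := A2 hφ hp (x := (n:ℝ)) (y := (n:ℝ)+1) (by linarith)
      simp only [add_sub_cancel_left, div_one] at hs
      have := hc ((n:ℝ)+1)
      push_cast
      push_cast at ih
      nlinarith
  have hub : ∀ n : ℕ, (n:ℝ) * y' - φ (n:ℝ) ≤ ψ y' := fun n => (hψ y').1 ⟨(n:ℝ), rfl⟩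
  obtain ⟨n, hn⟩ := exists_nat_gt (ψ y' - ((0:ℝ) * y' - φ 0))
  linarith [hg n, hub n]

lemma unbdd_below (hφ : StrictConvexOn ℝ Set.univ φ)
    (hp : ∀ x, Tendsto (fun t => (φ (x + t) - φ x) / t) (𝓝[>] 0) (𝓝 (φp x)))
    (hψ : ∀ y, IsLUB {z | ∃ x, z = x * y - φ x} (ψ y))
    (y : ℝ) : ∃ x, φp x < y := by
  by_contra hc
  push_neg at hc
  set y' := y - 1 with hy'
  have hg : ∀ n : ℕ, (-(0:ℝ)) * y' - φ (-0) + n ≤ (-(n:ℝ)) * y' - φ (-(n:ℝ)) := by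
    intro n
    induction n with
    | zero => simp
    | succ n ih =>
      have hs := A1 hφ hp (x := -((n:ℝ)+1)) (y := -(n:ℝ)) (by linarith)
      have he : -(n:ℝ) - (-((n:ℝ)+1)) = 1 := by ring
      rw [he, div_one] at hs
      have := hc (-((n:ℝ)+1))
      push_cast
      push_cast at ih
      nlinarith
  have hub : ∀ n : ℕ, (-(n:ℝ)) * y' - φ (-(n:ℝ)) ≤ ψ y' := fun n => (hψ y').1 ⟨-(n:ℝ), rfl⟩
  obtain ⟨n, hn⟩ := exists_nat_gt (ψ y' - ((-(0:ℝ)) * y' - φ (-0)))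
  linarith [hg n, hub n]

end Aux2



noncomputable def SBstep (x : ℝ) (s : ℤ × ℕ × ℤ × ℕ) : ℤ × ℕ × ℤ × ℕ :=
  if x < ((s.1 + s.2.2.1 : ℤ):ℝ)/((s.2.1 + s.2.2.2 : ℕ):ℝ) then
    (s.1, s.2.1, s.1 + s.2.2.1, s.2.1 + s.2.2.2)
  else (s.1 + s.2.2.1, s.2.1 + s.2.2.2, s.2.2.1, s.2.2.2)

noncomputable def SB (x : ℝ) : ℕ → ℤ × ℕ × ℤ × ℕ
  | 0 => (⌊x⌋, 1, ⌊x⌋ + 1, 1)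
  | n+1 => SBstep x (SB x n)

noncomputable def SA (x : ℝ) (n : ℕ) : ℤ := (SB x n).1
noncomputable def SBb (x : ℝ) (n : ℕ) : ℕ := (SB x n).2.1
noncomputable def SC (x : ℝ) (n : ℕ) : ℤ := (SB x n).2.2.1
noncomputable def SD (x : ℝ) (n : ℕ) : ℕ := (SB x n).2.2.2

noncomputable def SMed (x : ℝ) (n : ℕ) : ℝ :=
  ((SA x n + SC x n : ℤ):ℝ)/((SBb x n + SD x n : ℕ):ℝ)

lemma SB_succ_lt {x : ℝ} {n : ℕ} (h : x < SMed x n) :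
    SA x (n+1) = SA x n ∧ SBb x (n+1) = SBb x n ∧
    SC x (n+1) = SA x n + SC x n ∧ SD x (n+1) = SBb x n + SD x n := by
  have h' : x < ((SB x n).1 + (SB x n).2.2.1 : ℤ) / (((SB x n).2.1 + (SB x n).2.2.2 : ℕ) : ℝ) := h
  have : SB x (n+1) = (SA x n, SBb x n, SA x n + SC x n, SBb x n + SD x n) := by
    show SBstep x (SB x n) = _
    rw [SBstep, if_pos h']
    rfl
  refine ⟨?_, ?_, ?_, ?_⟩ <;> simp [SA, SBb, SC, SD, this]

lemma SB_succ_ge {x : ℝ} {n : ℕ} (h : ¬ x < SMed x n) :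
    SA x (n+1) = SA x n + SC x n ∧ SBb x (n+1) = SBb x n + SD x n ∧
    SC x (n+1) = SC x n ∧ SD x (n+1) = SD x n := by
  have h' : ¬ x < ((SB x n).1 + (SB x n).2.2.1 : ℤ) / (((SB x n).2.1 + (SB x n).2.2.2 : ℕ) : ℝ) := h
  have : SB x (n+1) = (SA x n + SC x n, SBb x n + SD x n, SC x n, SD x n) := by
    show SBstep x (SB x n) = _
    rw [SBstep, if_neg h']
    rfl
  refine ⟨?_, ?_, ?_, ?_⟩ <;> simp [SA, SBb, SC, SD, this]

lemma irr_ne_frac {x : ℝ} (hx : Irrational x) (a : ℤ) (b : ℕ) (hb : 0 < b) :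
    x ≠ (a:ℝ)/(b:ℝ) := by
  intro h
  refine hx ⟨(a:ℚ)/(b:ℚ), ?_⟩
  rw [h]
  push_cast
  ring

lemma SB_inv {x : ℝ} (hx : Irrational x) (n : ℕ) :
    0 < SBb x n ∧ 0 < SD x n ∧
    (SBb x n : ℤ) * SC x n - SA x n * (SD x n : ℤ) = 1 ∧
    (SA x n : ℝ) / (SBb x n : ℝ) < x ∧ x < (SC x n : ℝ) / (SD x n : ℝ) := by
  induction n with
  | zero =>
    refine ⟨one_pos, one_pos, by simp [SA, SBb, SC, SD, SB], ?_, ?_⟩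
    · simp only [SA, SBb, SB, Nat.cast_one, div_one]
      exact lt_of_le_of_ne (Int.floor_le x) (Ne.symm (by simpa using hx.ne_int ⌊x⌋))
    · simp only [SC, SD, SB, Nat.cast_one, div_one]
      push_cast
      exact Int.lt_floor_add_one x
  | succ n ih =>
    obtain ⟨hb, hd, hdet, hax, hxc⟩ := ih
    have hbd : (0:ℝ) < ((SBb x n + SD x n : ℕ):ℝ) := by positivity
    have hmed_ne : x ≠ SMed x n :=
      irr_ne_frac hx (SA x n + SC x n) (SBb x n + SD x n) (by omega)
    by_cases h : x < SMed x n
    · obtain ⟨e1, e2, e3, e4⟩ := SB_succ_lt h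
      rw [e1, e2, e3, e4]
      have hxc' : x < ((SA x n + SC x n : ℤ) : ℝ) / (((SBb x n + SD x n : ℕ) : ℕ) : ℝ) := h
      have hgoal : x < ((SA x n + SC x n : ℤ) : ℝ) / (((SBb x n + SD x n : ℕ) : ℕ) : ℝ) := hxc'
      exact ⟨hb, by omega, by push_cast; push_cast at hdet; linarith, hax, by push_cast; push_cast at hgoal; linarith⟩
    · obtain ⟨e1, e2, e3, e4⟩ := SB_succ_ge h
      rw [e1, e2, e3, e4]
      have hgt : SMed x n < x := lt_of_le_of_ne (not_lt.1 h) (Ne.symm hmed_ne)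
      have hgt' : ((SA x n + SC x n : ℤ) : ℝ) / (((SBb x n + SD x n : ℕ) : ℕ) : ℝ) < x := hgt
      exact ⟨by omega, hd, by push_cast; push_cast at hdet; linarith, by push_cast; push_cast at hgt'; linarith, hxc⟩

lemma SB_err {x : ℝ} (hx : Irrational x) (n : ℕ) :
    0 < x - (SA x n : ℝ) / (SBb x n : ℝ) ∧
    x - (SA x n : ℝ) / (SBb x n : ℝ) < 1 / ((SBb x n : ℝ) * (SD x n : ℝ)) ∧
    0 < (SC x n : ℝ) / (SD x n : ℝ) - x ∧
    (SC x n : ℝ) / (SD x n : ℝ) - x < 1 / ((SBb x n : ℝ) * (SD x n : ℝ)) := by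
  obtain ⟨hb, hd, hdet, hax, hxc⟩ := SB_inv hx n
  have hb' : (0:ℝ) < (SBb x n : ℝ) := by exact_mod_cast hb
  have hd' : (0:ℝ) < (SD x n : ℝ) := by exact_mod_cast hd
  have hgap : (SC x n : ℝ) / (SD x n : ℝ) - (SA x n : ℝ) / (SBb x n : ℝ)
      = 1 / ((SBb x n : ℝ) * (SD x n : ℝ)) := by
    have hdet' : (SBb x n : ℝ) * (SC x n : ℝ) - (SA x n : ℝ) * (SD x n : ℝ) = 1 := by
      exact_mod_cast hdet
    rw [div_sub_div _ _ hd'.ne' hb'.ne',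
      show (SC x n : ℝ) * (SBb x n : ℝ) - (SD x n : ℝ) * (SA x n : ℝ) = 1 by linarith [hdet'],
      one_div, one_div]
    congr 1
    ring
  exact ⟨by linarith, by linarith, by linarith, by linarith⟩

lemma SBb_mono (x : ℝ) : Monotone (SBb x) := by
  apply monotone_nat_of_le_succ
  intro n
  by_cases h : x < SMed x n
  · rw [(SB_succ_lt h).2.1]
  · rw [(SB_succ_ge h).2.1]; omega

lemma SB_sum (x : ℝ) (n : ℕ) (hx : Irrational x) : n + 2 ≤ SBb x n + SD x n := by
  induction n with
  | zero => simp [SBb, SD, SB]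
  | succ n ih =>
    obtain ⟨hb, hd, -, -, -⟩ := SB_inv hx n
    by_cases h : x < SMed x n
    · obtain ⟨-, e2, -, e4⟩ := SB_succ_lt h
      omega
    · obtain ⟨-, e2, -, e4⟩ := SB_succ_ge h
      omega

/-- If from time n₀ on every step is a right-move (`¬ x < SMed`), contradiction. -/
lemma SB_not_all_right {x : ℝ} (hx : Irrational x) (n₀ : ℕ)
    (h : ∀ n, n₀ ≤ n → ¬ x < SMed x n) : False := by
  have key : ∀ k, SC x (n₀ + k) = SC x n₀ ∧ SD x (n₀ + k) = SD x n₀ ∧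
      SBb x n₀ + k ≤ SBb x (n₀ + k) := by
    intro k
    induction k with
    | zero => simp
    | succ k ih =>
      obtain ⟨e1, e2, e3⟩ := ih
      obtain ⟨-, f2, f3, f4⟩ := SB_succ_ge (h (n₀ + k) (by omega))
      obtain ⟨-, hd, -, -, -⟩ := SB_inv hx (n₀ + k)
      constructor
      · rw [show n₀ + (k+1) = (n₀ + k) + 1 from rfl, f3, e1]
      constructor
      · rw [show n₀ + (k+1) = (n₀ + k) + 1 from rfl, f4, e2]
      · rw [show n₀ + (k+1) = (n₀ + k) + 1 from rfl, f2]
        omega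
  -- c/d - x is a fixed positive number, but bounded by 1/(B_k d) → 0
  obtain ⟨-, -, hpos, -⟩ := SB_err hx n₀
  set ε := (SC x n₀ : ℝ) / (SD x n₀ : ℝ) - x with hε
  obtain ⟨k, hk⟩ := exists_nat_gt (1 / (ε * (SD x n₀ : ℝ)))
  obtain ⟨e1, e2, e3⟩ := key k
  obtain ⟨-, -, hpos2, hlt⟩ := SB_err hx (n₀ + k)
  rw [e1, e2] at hlt
  obtain ⟨hb0, hd0, -, -, -⟩ := SB_inv hx n₀
  have hd' : (0:ℝ) < (SD x n₀ : ℝ) := by exact_mod_cast hd0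
  have hbk : (k:ℝ) ≤ (SBb x (n₀ + k) : ℝ) := by exact_mod_cast (by omega : k ≤ SBb x (n₀ + k))
  have hbk0 : (0:ℝ) < (SBb x (n₀ + k) : ℝ) := by
    have := (SB_inv hx (n₀ + k)).1
    exact_mod_cast this
  -- ε < 1/(B_{n₀+k} * d)  and  B_{n₀+k} ≥ k > 1/(ε d)
  have h1 : ε < 1 / ((SBb x (n₀ + k) : ℝ) * (SD x n₀ : ℝ)) := hlt
  have h2 : 1 / (ε * (SD x n₀ : ℝ)) < (SBb x (n₀ + k) : ℝ) := lt_of_lt_of_le hk hbk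
  have hε0 : 0 < ε := hpos
  rw [div_lt_iff₀ (by positivity)] at h2
  rw [lt_div_iff₀ (by positivity)] at h1
  nlinarith

/-- If from time n₀ on every step is a left-move (`x < SMed`), contradiction. -/
lemma SB_not_all_left {x : ℝ} (hx : Irrational x) (n₀ : ℕ)
    (h : ∀ n, n₀ ≤ n → x < SMed x n) : False := by
  have key : ∀ k, SA x (n₀ + k) = SA x n₀ ∧ SBb x (n₀ + k) = SBb x n₀ ∧
      SD x n₀ + k ≤ SD x (n₀ + k) := by
    intro k
    induction k with
    | zero => simp
    | succ k ih =>
      obtain ⟨e1, e2, e3⟩ := ih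
      obtain ⟨f1, f2, -, f4⟩ := SB_succ_lt (h (n₀ + k) (by omega))
      obtain ⟨hb, -, -, -, -⟩ := SB_inv hx (n₀ + k)
      refine ⟨?_, ?_, ?_⟩
      · rw [show n₀ + (k+1) = (n₀ + k) + 1 from rfl, f1, e1]
      · rw [show n₀ + (k+1) = (n₀ + k) + 1 from rfl, f2, e2]
      · rw [show n₀ + (k+1) = (n₀ + k) + 1 from rfl, f4]
        omega
  obtain ⟨hpos, -, -, -⟩ := SB_err hx n₀
  set ε := x - (SA x n₀ : ℝ) / (SBb x n₀ : ℝ) with hε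
  obtain ⟨k, hk⟩ := exists_nat_gt (1 / (ε * (SBb x n₀ : ℝ)))
  obtain ⟨e1, e2, e3⟩ := key k
  obtain ⟨-, hlt, -, -⟩ := SB_err hx (n₀ + k)
  rw [e1, e2] at hlt
  obtain ⟨hb0, hd0, -, -, -⟩ := SB_inv hx n₀
  have hb' : (0:ℝ) < (SBb x n₀ : ℝ) := by exact_mod_cast hb0
  have hdk : (k:ℝ) ≤ (SD x (n₀ + k) : ℝ) := by exact_mod_cast (by omega : k ≤ SD x (n₀ + k))
  have hdk0 : (0:ℝ) < (SD x (n₀ + k) : ℝ) := by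
    have := (SB_inv hx (n₀ + k)).2.1
    exact_mod_cast this
  have h1 : ε < 1 / ((SBb x n₀ : ℝ) * (SD x (n₀ + k) : ℝ)) := hlt
  have h2 : 1 / (ε * (SBb x n₀ : ℝ)) < (SD x (n₀ + k) : ℝ) := lt_of_lt_of_le hk hdk
  have hε0 : 0 < ε := hpos
  rw [div_lt_iff₀ (by positivity)] at h2
  rw [lt_div_iff₀ (by positivity)] at h1
  nlinarith

/-- One-sided rational approximation from below, with coprime numerator/denominator. -/
lemma stern_brocot {x : ℝ} (hx : Irrational x) (N : ℕ) :
    ∃ (p : ℤ) (q : ℕ), N ≤ q ∧ 0 < q ∧ Int.gcd p (q:ℤ) = 1 ∧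
      0 < x - (p:ℝ)/(q:ℝ) ∧ x - (p:ℝ)/(q:ℝ) < 1/(q:ℝ)^2 := by
  -- find a right-move at time n ≥ 2N; it makes B_{n+1} ≥ n+2 ≥ 2N+2 ≥ N
  obtain ⟨n, hn, hnr⟩ : ∃ n, 2*N ≤ n ∧ ¬ x < SMed x n := by
    by_contra hc
    push_neg at hc
    exact SB_not_all_left hx (2*N) (fun n hn => hc n hn)
  have hB : N ≤ SBb x (n+1) := by
    obtain ⟨-, e2, -, -⟩ := SB_succ_ge hnr
    have h1 := SB_sum x n hx
    omega
  -- find a left-move at time m ≥ n+1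
  obtain ⟨m, hm, hml⟩ : ∃ m, n+1 ≤ m ∧ x < SMed x m := by
    by_contra hc
    push_neg at hc
    exact SB_not_all_right hx (n+1) (fun m hm => not_lt.2 (hc m hm))
  -- at a left-move, A,B are kept and D_{m+1} = B m + D m > B m
  obtain ⟨f1, f2, -, f4⟩ := SB_succ_lt hml
  obtain ⟨hb, hd, hdet, -, -⟩ := SB_inv hx m
  refine ⟨SA x m, SBb x m, le_trans hB (SBb_mono x hm), hb, ?_, ?_, ?_⟩
  · -- gcd from determinant
    have : (Int.gcd (SA x m) (SBb x m) : ℤ) ∣ 1 := by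
      have h1 : (Int.gcd (SA x m) (SBb x m) : ℤ) ∣ SA x m := Int.gcd_dvd_left _ _
      have h2 : (Int.gcd (SA x m) (SBb x m) : ℤ) ∣ (SBb x m : ℤ) := Int.gcd_dvd_right _ _
      have := dvd_sub (h2.mul_right (SC x m)) (h1.mul_right (SD x m : ℤ))
      rwa [hdet] at this
    simpa using Int.eq_one_of_dvd_one (by positivity) this
  · have := (SB_err hx m).1
    exact this
  · have herr := (SB_err hx (m+1)).1
    have hlt := (SB_err hx (m+1)).2.1
    rw [f1, f2, f4] at hlt
    have hb' : (0:ℝ) < (SBb x m : ℝ) := by exact_mod_cast hb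
    have hd' : (0:ℝ) < (SD x m : ℝ) := by exact_mod_cast hd
    refine lt_of_lt_of_le hlt ?_
    rw [pow_two]
    apply one_div_le_one_div_of_le (by positivity)
    have : (SBb x m : ℝ) ≤ ((SBb x m + SD x m : ℕ) : ℝ) := by
      push_cast; linarith
    nlinarith


section Win
variable {φ φp ψ : ℝ → ℝ} {ν : ℝ} {u : ℕ → ℝ → ℝ}

set_option maxHeartbeats 2000000 in
lemma window_dim (hφ : StrictConvexOn ℝ Set.univ φ)
    (hp : ∀ x, Tendsto (fun t => (φ (x + t) - φ x) / t) (𝓝[>] 0) (𝓝 (φp x)))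
    (hν : ν ∈ Set.Ioo (0:ℝ) 1)
    (hu_pos : ∀ q x, 0 < x → 0 < u q x)
    (hflat : ∀ (p : ℤ) (q : ℕ), 0 < q → Int.gcd p (q:ℤ) = 1 →
      ∀ x ∈ Set.Ioo ((p:ℝ)/(q:ℝ)) ((p:ℝ)/(q:ℝ) + 1/(4*(q:ℝ))),
        0 < φ x - φ ((p:ℝ)/(q:ℝ)) - φp ((p:ℝ)/(q:ℝ)) * (x - (p:ℝ)/(q:ℝ)) ∧
        φ x - φ ((p:ℝ)/(q:ℝ)) - φp ((p:ℝ)/(q:ℝ)) * (x - (p:ℝ)/(q:ℝ))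
          < u q (x - (p:ℝ)/(q:ℝ)))
    (hψ : ∀ y, IsLUB {z | ∃ x, z = x * y - φ x} (ψ y))
    (hu_lim : Tendsto (fun q : ℕ => (q:ℝ)^((1:ℝ)+ν) * u q (2/(q:ℝ)^((1:ℝ)+ν)))
      atTop (𝓝 0))
    (θ : ℝ) (hθ : θ ∈ Set.Ioc (0:ℝ) 1)
    (hsumθ : Summable (fun q : ℕ =>
        (q:ℝ)^((1+ν)*θ+1) * (u q (1/(q:ℝ)^((1:ℝ)+ν)))^θ))
    (n : ℤ) :
    dimH (({y : ℝ | ∀ r : ℚ, ¬ (sSup (φp '' Iio (r:ℝ)) < y ∧ y < φp (r:ℝ))} ∩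
      Icc (φp (n:ℝ)) (φp ((n:ℝ)+1))) : Set ℝ) ≤ ENNReal.ofReal θ := by
  classical
  have hν0 : 0 < ν := hν.1
  have hν1 : ν < 1 := hν.2
  have hθ0 : 0 < θ := hθ.1
  set δ : ℕ → ℝ := fun q => 1/(q:ℝ)^((1:ℝ)+ν) with hδdef
  have hδpos : ∀ q : ℕ, 0 < q → 0 < δ q := by
    intro q hq
    have : (0:ℝ) < (q:ℝ) := by exact_mod_cast hq
    simp only [hδdef]
    positivity
  -- choose q₀
  obtain ⟨q₀, hq₀⟩ : ∃ q₀ : ℕ, ∀ q, q₀ ≤ q → 1 ≤ q ∧ 8 < (q:ℝ)^ν ∧ 2 < (q:ℝ)^((1:ℝ)-ν) := by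
    have h1 : Tendsto (fun q : ℕ => ((q:ℝ))^ν) atTop atTop :=
      (tendsto_rpow_atTop hν0).comp tendsto_natCast_atTop_atTop
    have h2 : Tendsto (fun q : ℕ => ((q:ℝ))^((1:ℝ)-ν)) atTop atTop :=
      (tendsto_rpow_atTop (by linarith)).comp tendsto_natCast_atTop_atTop
    have h3 := (h1.eventually_gt_atTop 8).and ((h2.eventually_gt_atTop 2).and
      (eventually_ge_atTop (1:ℕ)))
    rcases h3.exists_forall_of_atTop with ⟨q₀, hq₀⟩
    exact ⟨q₀, fun q hq => ⟨(hq₀ q hq).2.2, (hq₀ q hq).1, (hq₀ q hq).2.1⟩⟩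
  -- basic consequences
  have hq₀' : ∀ q, q₀ ≤ q → 0 < q ∧ 2*δ q < 1/(4*(q:ℝ)) ∧ 1/(q:ℝ)^2 < δ q / 2 ∧ δ q ≤ 1 := by
    intro q hq
    obtain ⟨hq1, h8, h2'⟩ := hq₀ q hq
    have hq0 : 0 < q := hq1
    have hqpos : (0:ℝ) < (q:ℝ) := by exact_mod_cast hq0
    have hν' : (0:ℝ) < (q:ℝ)^ν := Real.rpow_pos_of_pos hqpos ν
    have hν'' : (0:ℝ) < (q:ℝ)^((1:ℝ)-ν) := Real.rpow_pos_of_pos hqpos _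
    have hsplit : (q:ℝ)^((1:ℝ)+ν) = (q:ℝ) * (q:ℝ)^ν := by
      rw [Real.rpow_add hqpos, Real.rpow_one]
    have hsplit2 : (q:ℝ)^((1:ℝ)-ν) * (q:ℝ)^ν = (q:ℝ) := by
      rw [← Real.rpow_add hqpos]
      norm_num
    have hXpos : (0:ℝ) < (q:ℝ)^((1:ℝ)+ν) := Real.rpow_pos_of_pos hqpos _
    have hδq : δ q = 1/((q:ℝ) * (q:ℝ)^ν) := by
      simp only [hδdef]
      rw [hsplit]
    refine ⟨hq0, ?_, ?_, ?_⟩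
    · rw [hδq, mul_one_div, div_lt_div_iff₀ (by positivity) (by positivity)]
      nlinarith
    · rw [hδq, div_div]
      apply one_div_lt_one_div_of_lt (by positivity)
      have h2q : 2 * (q:ℝ)^ν < (q:ℝ) := by nlinarith
      have hsq : (q:ℝ)^2 = (q:ℝ) * (q:ℝ) := by ring
      nlinarith
    · simp only [hδdef]
      rw [div_le_one hXpos, hsplit]
      nlinarith
  -- the gap estimates
  have key_gap : ∀ q, q₀ ≤ q → ∀ p : ℤ, Int.gcd p (q:ℤ) = 1 →
      φp ((p:ℝ)/(q:ℝ) + δ q/2) - φp ((p:ℝ)/(q:ℝ)) ≤ 2*((q:ℝ)^((1:ℝ)+ν)) * u q (δ q)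
      ∧ φp ((p:ℝ)/(q:ℝ) + δ q) - φp ((p:ℝ)/(q:ℝ)) ≤ (q:ℝ)^((1:ℝ)+ν) * u q (2*δ q) := by
    intro q hq p hgcd
    obtain ⟨hq0n, hlt4, hlt2, hle1⟩ := hq₀' q hq
    have hqpos : (0:ℝ) < (q:ℝ) := by exact_mod_cast hq0n
    have hd0 : 0 < δ q := hδpos q hq0n
    have hXpos : (0:ℝ) < (q:ℝ)^((1:ℝ)+ν) := Real.rpow_pos_of_pos hqpos _
    have hmul : δ q * (q:ℝ)^((1:ℝ)+ν) = 1 := by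
      simp only [hδdef]
      field_simp
    have harg : ∀ z:ℝ, (p:ℝ)/(q:ℝ) + z - (p:ℝ)/(q:ℝ) = z := fun z => by ring
    have h1 := hflat p q hq0n hgcd ((p:ℝ)/(q:ℝ) + δ q/2) ⟨by linarith, by linarith⟩
    have h2 := hflat p q hq0n hgcd ((p:ℝ)/(q:ℝ) + δ q) ⟨by linarith, by linarith⟩
    have h3 := hflat p q hq0n hgcd ((p:ℝ)/(q:ℝ) + 2*δ q) ⟨by linarith, by linarith⟩
    rw [harg (δ q/2)] at h1
    rw [harg (δ q)] at h2
    rw [harg (2*δ q)] at h3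
    have hsup1 := A4 hφ hp ((p:ℝ)/(q:ℝ) + δ q/2) ((p:ℝ)/(q:ℝ) + δ q)
    have hsup2 := A4 hφ hp ((p:ℝ)/(q:ℝ) + δ q) ((p:ℝ)/(q:ℝ) + 2*δ q)
    constructor
    · -- gap(δ/2) ≤ 2 X u(δ)
      have e1 : (φp ((p:ℝ)/(q:ℝ) + δ q/2) - φp ((p:ℝ)/(q:ℝ))) * δ q < 2 * u q (δ q) := by
        nlinarith [h1.1, h2.2, hsup1]
      have hu0 : 0 < u q (δ q) := hu_pos q (δ q) hd0
      calc φp ((p:ℝ)/(q:ℝ) + δ q/2) - φp ((p:ℝ)/(q:ℝ))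
          = ((φp ((p:ℝ)/(q:ℝ) + δ q/2) - φp ((p:ℝ)/(q:ℝ))) * δ q) * (q:ℝ)^((1:ℝ)+ν) := by
            rw [mul_assoc, hmul, mul_one]
        _ ≤ (2 * u q (δ q)) * (q:ℝ)^((1:ℝ)+ν) :=
            mul_le_mul_of_nonneg_right e1.le hXpos.le
        _ = 2*((q:ℝ)^((1:ℝ)+ν)) * u q (δ q) := by ring
    · have e1 : (φp ((p:ℝ)/(q:ℝ) + δ q) - φp ((p:ℝ)/(q:ℝ))) * δ q < u q (2*δ q) := by
        nlinarith [h2.1, h3.2, hsup2]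
      calc φp ((p:ℝ)/(q:ℝ) + δ q) - φp ((p:ℝ)/(q:ℝ))
          = ((φp ((p:ℝ)/(q:ℝ) + δ q) - φp ((p:ℝ)/(q:ℝ))) * δ q) * (q:ℝ)^((1:ℝ)+ν) := by
            rw [mul_assoc, hmul, mul_one]
        _ ≤ (u q (2*δ q)) * (q:ℝ)^((1:ℝ)+ν) :=
            mul_le_mul_of_nonneg_right e1.le hXpos.le
        _ = (q:ℝ)^((1:ℝ)+ν) * u q (2*δ q) := by ring
  set K : ℕ → ℤ → Set ℝ := fun q p =>
    if Int.gcd p (q:ℤ) = 1 then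
      Icc (φp ((p:ℝ)/(q:ℝ))) (φp ((p:ℝ)/(q:ℝ) + δ q/2)) else ∅ with hKdef
  set g : ℕ → ℝ := fun q => (q:ℝ)^((1:ℝ)+ν) * u q (2*δ q) with hgdef
  have hg_lim : Tendsto g atTop (𝓝 0) := by
    have : g = fun q : ℕ => (q:ℝ)^((1:ℝ)+ν) * u q (2/(q:ℝ)^((1:ℝ)+ν)) := by
      funext q
      simp only [hgdef, hδdef]
      congr 2
      ring
    rw [this]
    exact hu_lim
  have hK_diam : ∀ q, q₀ ≤ q → ∀ p : ℤ, EMetric.diam (K q p) ≤ ENNReal.ofReal (g q) := by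
    intro q hq p
    simp only [hKdef]
    by_cases hg : Int.gcd p (q:ℤ) = 1
    · rw [if_pos hg, EMetric.diam, Real.ediam_Icc]
      apply ENNReal.ofReal_le_ofReal
      have hd0 : 0 < δ q := hδpos q (hq₀' q hq).1
      have hmono : φp ((p:ℝ)/(q:ℝ) + δ q/2) ≤ φp ((p:ℝ)/(q:ℝ) + δ q) :=
        A3m hφ hp (by linarith)
      have := (key_gap q hq p hg).2
      simp only [hgdef]
      linarith
    · rw [if_neg hg]
      simp [EMetric.diam]
  have hK_diam2 : ∀ q, q₀ ≤ q → ∀ p : ℤ,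
      EMetric.diam (K q p) ≤ ENNReal.ofReal (2*((q:ℝ)^((1:ℝ)+ν)) * u q (δ q)) := by
    intro q hq p
    simp only [hKdef]
    by_cases hg : Int.gcd p (q:ℤ) = 1
    · rw [if_pos hg, EMetric.diam, Real.ediam_Icc]
      apply ENNReal.ofReal_le_ofReal
      have := (key_gap q hq p hg).1
      linarith
    · rw [if_neg hg]
      simp [EMetric.diam]
  set t : ℕ → ℕ × ℕ → Set ℝ := fun Q i =>
    if 1 ≤ i.2 ∧ i.2 ≤ 2*(Q + i.1) then
      K (Q + i.1) ((((Q:ℤ) + (i.1:ℤ))) * ((n:ℤ) - 1) + (i.2:ℤ)) else ∅ with htdef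
  set r : ℕ → ℝ≥0∞ := fun Q => ⨆ a : ℕ, ENNReal.ofReal (g (Q + a)) with hrdef
  have hr : Tendsto r atTop (𝓝 0) := by
    rw [ENNReal.tendsto_atTop_zero]
    intro ε hε
    obtain ⟨c, hc0, hc1⟩ := exists_between (lt_min hε (by norm_num : (0:ℝ≥0∞) < 1))
    have hcne : c ≠ ⊤ := ne_top_of_lt (lt_of_lt_of_le hc1 (min_le_right _ _))
    have hc0' : 0 < c.toReal := ENNReal.toReal_pos (pos_iff_ne_zero.1 hc0) hcne
    obtain ⟨N, hN⟩ := eventually_atTop.1 (hg_lim.eventually_lt_const hc0')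
    refine ⟨N, fun Q hQ => ?_⟩
    simp only [hrdef]
    refine iSup_le fun a => ?_
    have := hN (Q + a) (by omega)
    calc ENNReal.ofReal (g (Q + a)) ≤ ENNReal.ofReal c.toReal := ENNReal.ofReal_le_ofReal this.le
      _ = c := ENNReal.ofReal_toReal hcne
      _ ≤ ε := (lt_of_lt_of_le hc1 (min_le_left _ _)).le
  have ht : ∀ᶠ Q in atTop, ∀ i : ℕ × ℕ, EMetric.diam (t Q i) ≤ r Q := by
    filter_upwards [eventually_ge_atTop q₀] with Q hQ
    intro i
    simp only [htdef]
    by_cases hcond : 1 ≤ i.2 ∧ i.2 ≤ 2*(Q + i.1)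
    · rw [if_pos hcond]
      refine le_trans (hK_diam (Q + i.1) (by omega) _) ?_
      exact le_iSup (fun a => ENNReal.ofReal (g (Q + a))) i.1
    · rw [if_neg hcond]
      simp [EMetric.diam]
  -- the exceptional countable set
  set Bcnt : Set ℝ := ⋃ (r : ℚ), {sSup (φp '' Iio (r:ℝ)), φp (r:ℝ)} with hBdef
  have hBcnt : Bcnt.Countable := by
    apply Set.countable_iUnion
    intro r
    exact (Set.countable_singleton _).insert _
  set E : Set ℝ := {y : ℝ | ∀ r : ℚ, ¬ (sSup (φp '' Iio (r:ℝ)) < y ∧ y < φp (r:ℝ))} with hEdef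
  set A : Set ℝ := (E ∩ Icc (φp (n:ℝ)) (φp ((n:ℝ)+1))) \ Bcnt with hAdef
  have hst : ∀ᶠ Q in atTop, A ⊆ ⋃ i : ℕ × ℕ, t Q i := by
    filter_upwards [eventually_ge_atTop q₀] with Q hQ
    intro y hy
    obtain ⟨⟨hyE, hyIcc⟩, hyB⟩ := hy
    set S : Set ℝ := {x | φp x ≤ y} with hSdef
    have hSne : S.Nonempty := by
      obtain ⟨x₀, hx₀⟩ := unbdd_below hφ hp hψ y
      exact ⟨x₀, hx₀.le⟩
    have hSbdd : BddAbove S := by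
      obtain ⟨x₁, hx₁⟩ := unbdd_above hφ hp hψ y
      refine ⟨x₁, fun z hz => ?_⟩
      by_contra hzx
      push_neg at hzx
      exact absurd (le_trans (A3m hφ hp hzx.le) hz) (not_le.2 hx₁)
    set xy := sSup S with hxydef
    have hlow : ∀ w, w < xy → φp w ≤ y := by
      intro w hw
      obtain ⟨z, hzS, hwz⟩ := exists_lt_of_lt_csSup hSne hw
      exact le_trans (A3m hφ hp hwz.le) hzS
    have hhigh : ∀ w, xy < w → y < φp w := by
      intro w hw
      by_contra hc
      push_neg at hc
      exact absurd (le_csSup hSbdd hc) (not_le.2 hw)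
    have hxyl : (n:ℝ) ≤ xy := le_csSup hSbdd hyIcc.1
    have hxyu : xy ≤ (n:ℝ)+1 := by
      refine csSup_le hSne fun z hz => ?_
      by_contra hcz
      push_neg at hcz
      exact absurd (lt_of_le_of_lt hyIcc.2 (A3 hφ hp hcz)) (not_lt.2 hz)
    have hirr : Irrational xy := by
      rintro ⟨rq, hrq⟩
      have hyle : y ≤ φp ((rq:ℝ)) := by
        by_contra hc
        push_neg at hc
        obtain ⟨s, hs0, hs⟩ := A6 hφ hp (rq:ℝ) (show 0 < (y - φp (rq:ℝ))/2 by linarith)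
        have hgt := hhigh ((rq:ℝ) + s) (by rw [← hrq] at *; linarith)
        linarith
      have hLne : (φp '' Iio (rq:ℝ)).Nonempty := ⟨φp ((rq:ℝ)-1), (rq:ℝ)-1, by simp, rfl⟩
      have hLy : sSup (φp '' Iio (rq:ℝ)) ≤ y := by
        refine csSup_le hLne ?_
        rintro z ⟨w, hw, rfl⟩
        exact hlow w (by rw [← hrq]; exact hw)
      have hyB1 : y ≠ sSup (φp '' Iio (rq:ℝ)) := by
        intro hcontra
        exact hyB (mem_iUnion.2 ⟨rq, by rw [hcontra]; exact mem_insert _ _⟩)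
      have hyB2 : y ≠ φp (rq:ℝ) := by
        intro hcontra
        exact hyB (mem_iUnion.2 ⟨rq, by rw [hcontra]; exact mem_insert_iff.2 (Or.inr rfl)⟩)
      exact hyE rq ⟨lt_of_le_of_ne hLy (Ne.symm hyB1), lt_of_le_of_ne hyle hyB2⟩
    obtain ⟨p, q, hqQ, hq0, hgcd, herr1, herr2⟩ := stern_brocot hirr Q
    have hqq₀ : q₀ ≤ q := le_trans hQ hqQ
    obtain ⟨-, -, hlt2, hle1⟩ := hq₀' q hqq₀
    have hqpos : (0:ℝ) < (q:ℝ) := by exact_mod_cast hq0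
    have herr3 : xy - (p:ℝ)/(q:ℝ) < δ q / 2 := lt_trans herr2 hlt2
    have hyK : y ∈ K q p := by
      simp only [hKdef]
      rw [if_pos hgcd]
      exact ⟨hlow _ (by linarith), (hhigh _ (by linarith)).le⟩
    -- index bookkeeping
    have hpl : (q:ℤ)*((n:ℤ)-1) < p := by
      have hr : (q:ℝ)*((n:ℝ)-1) < (p:ℝ) := by
        have h1 : (n:ℝ) - 1 < (p:ℝ)/(q:ℝ) := by nlinarith
        calc (q:ℝ)*((n:ℝ)-1) < (q:ℝ)*((p:ℝ)/(q:ℝ)) := by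
              exact mul_lt_mul_of_pos_left h1 hqpos
          _ = (p:ℝ) := by field_simp
      exact_mod_cast (by push_cast; exact hr : ((q*((n:ℤ)-1) : ℤ):ℝ) < ((p:ℤ):ℝ))
    have hpu : p < (q:ℤ)*((n:ℤ)+1) := by
      have hr : (p:ℝ) < (q:ℝ)*((n:ℝ)+1) := by
        have h1 : (p:ℝ)/(q:ℝ) < (n:ℝ)+1 := by nlinarith
        calc (p:ℝ) = (q:ℝ)*((p:ℝ)/(q:ℝ)) := by field_simp
          _ < (q:ℝ)*((n:ℝ)+1) := mul_lt_mul_of_pos_left h1 hqpos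
      exact_mod_cast (by push_cast; exact hr : ((p:ℤ):ℝ) < ((q*((n:ℤ)+1) : ℤ):ℝ))
    have hdist : (q:ℤ)*((n:ℤ)+1) = (q:ℤ)*((n:ℤ)-1) + 2*(q:ℤ) := by ring
    set j : ℕ := (p - (q:ℤ)*((n:ℤ)-1)).toNat with hjdef
    have hj1 : 1 ≤ j := by omega
    have hj2 : (j:ℤ) = p - (q:ℤ)*((n:ℤ)-1) := by omega
    have hj3 : j ≤ 2*q := by omega
    refine mem_iUnion.2 ⟨(q - Q, j), ?_⟩
    simp only [htdef]
    have hQa : Q + (q - Q) = q := by omega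
    rw [if_pos (by constructor <;> omega)]
    have hcast : ((Q:ℤ) + ((q - Q : ℕ):ℤ)) = (q:ℤ) := by omega
    have harg : ((Q:ℤ) + ((q - Q : ℕ):ℤ)) * ((n:ℤ) - 1) + (j:ℤ) = p := by
      rw [hcast]
      omega
    rw [show (Q + (q - Q)) = q from hQa, harg]
    exact hyK
  have hμ := MeasureTheory.Measure.hausdorffMeasure_le_liminf_tsum θ A r hr t ht hst
  have hμ0 : μH[θ] A = 0 := by
    set c : ℕ → ℝ := fun q => 6 * ((q:ℝ)^((1+ν)*θ+1) * (u q (δ q))^θ) with hcdef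
    have hc_sum : Summable c := by
      have : c = fun q : ℕ => 6 * ((q:ℝ)^((1+ν)*θ+1) * (u q (1/(q:ℝ)^((1:ℝ)+ν)))^θ) := rfl
      rw [this]
      exact hsumθ.mul_left 6
    have htail : Tendsto (fun Q => ∑' a : ℕ, c (Q + a)) atTop (𝓝 0) := by
      have h := tendsto_sum_nat_add c
      simpa [add_comm] using h
    have hstage : ∀ᶠ Q in atTop, ∑' i : ℕ × ℕ, EMetric.diam (t Q i)^θ
        ≤ ENNReal.ofReal (∑' a : ℕ, c (Q + a)) := by
      filter_upwards [eventually_ge_atTop (max q₀ 1)] with Q hQ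
      have hQq₀ : q₀ ≤ Q := le_trans (le_max_left _ _) hQ
      have hQ1 : 1 ≤ Q := le_trans (le_max_right _ _) hQ
      rw [ENNReal.tsum_prod']
      have hshift_sum : Summable (fun a : ℕ => c (Q + a)) := by
        have := (summable_nat_add_iff (f := c) Q).2 hc_sum
        simpa [add_comm] using this
      have hshift_nonneg : ∀ a : ℕ, 0 ≤ c (Q + a) := by
        intro a
        have hq1 : 0 < Q + a := by omega
        have hqpos : (0:ℝ) < ((Q+a:ℕ):ℝ) := by exact_mod_cast hq1
        have hd0 : 0 < δ (Q + a) := hδpos _ hq1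
        have hu0 : 0 < u (Q + a) (δ (Q + a)) := hu_pos _ _ hd0
        have h1 : (0:ℝ) ≤ ((Q+a:ℕ):ℝ)^((1+ν)*θ+1) := (Real.rpow_pos_of_pos hqpos _).le
        have h2 : (0:ℝ) ≤ (u (Q + a) (δ (Q + a)))^θ := (Real.rpow_pos_of_pos hu0 _).le
        simp only [hcdef]
        positivity
      rw [ENNReal.ofReal_tsum_of_nonneg hshift_nonneg hshift_sum]
      refine ENNReal.tsum_le_tsum fun a => ?_
      -- fix a; q := Q + a
      set q : ℕ := Q + a with hqdef
      have hq1 : 1 ≤ q := by omega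
      have hqq₀ : q₀ ≤ q := by omega
      have hqpos : (0:ℝ) < (q:ℝ) := by exact_mod_cast hq1
      have hd0 : 0 < δ q := hδpos _ (by omega)
      have hu0 : 0 < u q (δ q) := hu_pos _ _ hd0
      have hXpos : (0:ℝ) < (q:ℝ)^((1:ℝ)+ν) := Real.rpow_pos_of_pos hqpos _
      set B : ℝ≥0∞ := ENNReal.ofReal ((2*((q:ℝ)^((1:ℝ)+ν)) * u q (δ q))^θ) with hBdef2
      have hterm : ∀ j : ℕ, EMetric.diam (t Q (a, j))^θ
          ≤ if 1 ≤ j ∧ j ≤ 2*q then B else 0 := by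
        intro j
        simp only [htdef]
        by_cases hcond : 1 ≤ j ∧ j ≤ 2*(Q + a)
        · rw [if_pos hcond, if_pos (by omega : 1 ≤ j ∧ j ≤ 2*q)]
          have hdiam := hK_diam2 (Q + a) hqq₀ (((Q:ℤ) + (a:ℤ)) * ((n:ℤ) - 1) + (j:ℤ))
          have h2 := ENNReal.rpow_le_rpow hdiam hθ0.le
          refine le_trans h2 ?_
          rw [hBdef2, ← ENNReal.ofReal_rpow_of_nonneg (by positivity) hθ0.le]
        · rw [if_neg hcond, if_neg (by omega : ¬ (1 ≤ j ∧ j ≤ 2*q))]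
          simp only [EMetric.diam, EMetric.diam_empty]
          rw [ENNReal.zero_rpow_of_pos hθ0]
      calc ∑' j : ℕ, EMetric.diam (t Q (a, j))^θ
          ≤ ∑' j : ℕ, (if 1 ≤ j ∧ j ≤ 2*q then B else 0) := ENNReal.tsum_le_tsum hterm
        _ = ∑ j ∈ Finset.range (2*q+1), (if 1 ≤ j ∧ j ≤ 2*q then B else 0) := by
            refine tsum_eq_sum ?_
            intro b hb
            rw [if_neg]
            simp only [Finset.mem_range] at hb
            omega
        _ ≤ ∑ j ∈ Finset.range (2*q+1), B := by
            refine Finset.sum_le_sum fun j _ => ?_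
            split_ifs
            · exact le_refl _
            · exact zero_le
        _ = (2*q+1 : ℕ) * B := by
            rw [Finset.sum_const, Finset.card_range, nsmul_eq_mul]
        _ ≤ ENNReal.ofReal (c q) := by
            have hcast : ((2*q+1 : ℕ) : ℝ≥0∞) = ENNReal.ofReal ((2*q+1 : ℕ):ℝ) := by
              rw [ENNReal.ofReal_natCast]
            rw [hcast, hBdef2, ← ENNReal.ofReal_mul (by positivity)]
            apply ENNReal.ofReal_le_ofReal
            -- real arithmetic
            have hu0' : (0:ℝ) ≤ (u q (δ q))^θ := (Real.rpow_pos_of_pos hu0 _).le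
            have e1 : (2*((q:ℝ)^((1:ℝ)+ν)) * u q (δ q))^θ
                = 2^θ * ((q:ℝ)^((1:ℝ)+ν))^θ * (u q (δ q))^θ := by
              rw [Real.mul_rpow (by positivity) hu0.le, Real.mul_rpow (by norm_num) hXpos.le]
            have e2 : ((q:ℝ)^((1:ℝ)+ν))^θ = (q:ℝ)^(((1:ℝ)+ν)*θ) := by
              rw [← Real.rpow_mul hqpos.le]
            have e3 : (q:ℝ)^((1+ν)*θ+1) = (q:ℝ)^((1+ν)*θ) * (q:ℝ) := by
              rw [Real.rpow_add_one hqpos.ne']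
            have e4 : (2:ℝ)^θ ≤ 2 := by
              calc (2:ℝ)^θ ≤ (2:ℝ)^(1:ℝ) := Real.rpow_le_rpow_of_exponent_le (by norm_num) hθ.2
                _ = 2 := Real.rpow_one 2
            have e5 : ((2*q+1 : ℕ):ℝ) ≤ 3*(q:ℝ) := by
              push_cast
              have : (1:ℝ) ≤ (q:ℝ) := by exact_mod_cast hq1
              linarith
            have hXθ : (0:ℝ) < (q:ℝ)^(((1:ℝ)+ν)*θ) := Real.rpow_pos_of_pos hqpos _
            rw [e1, e2]
            simp only [hcdef, e3]
            have hq3 : (0:ℝ) < 3*(q:ℝ) := by linarith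
            have key : ((2*q+1 : ℕ):ℝ) * (2^θ * (q:ℝ)^(((1:ℝ)+ν)*θ) * (u q (δ q))^θ)
                ≤ (3*(q:ℝ)) * (2 * (q:ℝ)^(((1:ℝ)+ν)*θ) * (u q (δ q))^θ) := by
              apply mul_le_mul e5 _ (by positivity) hq3.le
              apply mul_le_mul_of_nonneg_right _ hu0'
              exact mul_le_mul_of_nonneg_right e4 hXθ.le
            calc ((2*q+1 : ℕ):ℝ) * (2^θ * (q:ℝ)^(((1:ℝ)+ν)*θ) * (u q (δ q))^θ)
                ≤ (3*(q:ℝ)) * (2 * (q:ℝ)^(((1:ℝ)+ν)*θ) * (u q (δ q))^θ) := key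
              _ = 6 * ((q:ℝ)^((1+ν)*θ) * (q:ℝ) * (u q (δ q))^θ) := by ring
    refine le_antisymm ?_ zero_le
    refine le_trans hμ ?_
    have hliminf := liminf_le_liminf hstage
    refine le_trans hliminf ?_
    have hconv : Tendsto (fun Q => ENNReal.ofReal (∑' a : ℕ, c (Q + a))) atTop (𝓝 0) := by
      have h0 : (0:ℝ≥0∞) = ENNReal.ofReal 0 := by simp
      rw [h0]
      exact (ENNReal.continuous_ofReal.tendsto 0).comp htail
    rw [hconv.liminf_eq]
  have hdimA : dimH A ≤ ENNReal.ofReal θ := by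
    have h' : μH[(θ.toNNReal : ℝ)] A ≠ ⊤ := by
      rw [Real.coe_toNNReal θ hθ0.le, hμ0]; exact ENNReal.zero_ne_top
    exact dimH_le_of_hausdorffMeasure_ne_top h'
  calc dimH (E ∩ Icc (φp (n:ℝ)) (φp ((n:ℝ)+1)))
      ≤ dimH (A ∪ Bcnt) := by
        apply dimH_mono
        intro y hy
        by_cases h : y ∈ Bcnt
        · exact Or.inr h
        · exact Or.inl ⟨hy, h⟩
    _ ≤ ENNReal.ofReal θ := by
        rw [dimH_union, dimH_countable hBcnt]
        simpa using hdimA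

end Win


theorem stmt8 (φ φp ψ : ℝ → ℝ) (hφ : StrictConvexOn ℝ Set.univ φ)
    (hp : ∀ x, Tendsto (fun t => (φ (x + t) - φ x) / t) (𝓝[>] 0) (𝓝 (φp x)))
    (ν : ℝ) (hν : ν ∈ Set.Ioo (0:ℝ) 1) (u : ℕ → ℝ → ℝ)
    (hu_pos : ∀ q x, 0 < x → 0 < u q x)
    (hflat : ∀ (p : ℤ) (q : ℕ), 0 < q → Int.gcd p (q:ℤ) = 1 →
      ∀ x ∈ Set.Ioo ((p:ℝ)/(q:ℝ)) ((p:ℝ)/(q:ℝ) + 1/(4*(q:ℝ))),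
        0 < φ x - φ ((p:ℝ)/(q:ℝ)) - φp ((p:ℝ)/(q:ℝ)) * (x - (p:ℝ)/(q:ℝ)) ∧
        φ x - φ ((p:ℝ)/(q:ℝ)) - φp ((p:ℝ)/(q:ℝ)) * (x - (p:ℝ)/(q:ℝ))
          < u q (x - (p:ℝ)/(q:ℝ)))
    (hsum : Summable (fun q : ℕ => (q:ℝ)^((2:ℝ)+ν) * u q (1/(q:ℝ)^((1:ℝ)+ν))))
    (hψ : ∀ y, IsLUB {z | ∃ x, z = x * y - φ x} (ψ y))
    (hu_lim : Tendsto (fun q : ℕ => (q:ℝ)^((1:ℝ)+ν) * u q (2/(q:ℝ)^((1:ℝ)+ν)))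
      atTop (𝓝 0))
    (hsumθ : ∀ θ ∈ Set.Ioc (0:ℝ) 1,
      Summable (fun q : ℕ =>
        (q:ℝ)^((1+ν)*θ+1) * (u q (1/(q:ℝ)^((1:ℝ)+ν)))^θ)) :
    dimH {y : ℝ | ¬ ∃ d : ℝ, HasDerivAt (deriv ψ) d y} = 0 := by
  set Y : Set ℝ := {y : ℝ | ¬ ∃ d : ℝ, HasDerivAt (deriv ψ) d y} with hYdef
  set E : Set ℝ := {y : ℝ | ∀ r : ℚ, ¬ (sSup (φp '' Iio (r:ℝ)) < y ∧ y < φp (r:ℝ))} with hEdef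
  have hYE : Y ⊆ E := by
    intro y hy r hr
    exact hy (good_point hφ hp hψ hr.1 hr.2)
  have hcover : ∀ y : ℝ, ∃ n : ℤ, φp (n:ℝ) ≤ y ∧ y ≤ φp ((n:ℝ)+1) := by
    intro y
    obtain ⟨x₀, hx₀⟩ := unbdd_below hφ hp hψ y
    obtain ⟨x₁, hx₁⟩ := unbdd_above hφ hp hψ y
    have hm : φp ((⌊x₀⌋ : ℤ):ℝ) ≤ y := le_trans (A3m hφ hp (Int.floor_le x₀)) hx₀.le
    have hM : y < φp ((⌈x₁⌉ : ℤ):ℝ) := lt_of_lt_of_le hx₁ (A3m hφ hp (Int.le_ceil x₁))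
    have hmM : ⌊x₀⌋ ≤ ⌈x₁⌉ := by
      by_contra hcon
      push_neg at hcon
      have h1 : ((⌈x₁⌉:ℤ):ℝ) ≤ ((⌊x₀⌋:ℤ):ℝ) := by exact_mod_cast hcon.le
      exact absurd (lt_of_lt_of_le hM (le_trans (A3m hφ hp h1) hm)) (lt_irrefl _)
    by_contra hno
    push_neg at hno
    have hstep : ∀ j : ℕ, φp (((⌊x₀⌋ + j : ℤ)):ℝ) ≤ y := by
      intro j
      induction j with
      | zero => simpa using hm
      | succ j ih =>
        have := hno (⌊x₀⌋ + j) ih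
        have hc : ((⌊x₀⌋ + ((j+1:ℕ):ℤ) : ℤ):ℝ) = ((⌊x₀⌋ + (j:ℕ) : ℤ):ℝ) + 1 := by push_cast; ring
        rw [hc]
        exact this.le
    have := hstep (⌈x₁⌉ - ⌊x₀⌋).toNat
    rw [show (⌊x₀⌋ + ((⌈x₁⌉ - ⌊x₀⌋).toNat : ℤ)) = ⌈x₁⌉ by omega] at this
    linarith
  have hθdim : ∀ θ : ℝ, θ ∈ Set.Ioc (0:ℝ) 1 → dimH Y ≤ ENNReal.ofReal θ := by
    intro θ hθ
    refine le_trans (dimH_mono hYE) ?_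
    have hEsub : E ⊆ ⋃ n : ℤ, (E ∩ Icc (φp (n:ℝ)) (φp ((n:ℝ)+1))) := by
      intro y hy
      obtain ⟨n, h1, h2⟩ := hcover y
      exact mem_iUnion.2 ⟨n, hy, h1, h2⟩
    refine le_trans (dimH_mono hEsub) ?_
    rw [dimH_iUnion]
    exact iSup_le fun n =>
      window_dim hφ hp hν hu_pos hflat hψ hu_lim θ hθ (hsumθ θ hθ) n
  by_contra hx
  have hpos : 0 < dimH Y := pos_iff_ne_zero.2 hx
  obtain ⟨c, hc0, hc1⟩ := exists_between (lt_min hpos (by norm_num : (0:ℝ≥0∞) < 1))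
  have hc1' : c < 1 := lt_of_lt_of_le hc1 (min_le_right _ _)
  have hcx : c < dimH Y := lt_of_lt_of_le hc1 (min_le_left _ _)
  have hcne : c ≠ ⊤ := ne_top_of_lt hc1'
  have htoReal : 0 < c.toReal := ENNReal.toReal_pos (pos_iff_ne_zero.1 hc0) hcne
  have h1 : c.toReal ≤ 1 := by
    rw [show (1:ℝ) = (1:ℝ≥0∞).toReal by simp]
    exact ENNReal.toReal_mono (by simp) hc1'.le
  have h2 := hθdim c.toReal ⟨htoReal, h1⟩
  rw [ENNReal.ofReal_toReal hcne] at h2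
  exact absurd (lt_of_lt_of_le hcx h2) (lt_irrefl _)
end

section
/- Let φ: ℝ → ℝ be strictly convex with superlinear growth, ψ its convex conjugate, and P ⊂ ℝ a set of positive Lebesgue measure such that for every x₀ ∈ P there exist c(x₀), δ(x₀) > 0 with φ(x) − φ(x₀) − y₀(x − x₀) ≥ c(x₀)|x − x₀|² for all x ∈ B(x₀, δ(x₀)) and all y₀ in the subdifferential D⁻φ(x₀). Then the set where the second derivative D²ψ exists and is strictly positive has positive Lebesgue measure; in particular D²ψ does not vanish almost everywhere. -/
open Filter Set Topology MeasureTheory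
open scoped NNReal

/-- The subdifferential of `φ` at `x`. -/
def subdiff (φ : ℝ → ℝ) (x : ℝ) : Set ℝ :=
  {y | ∀ x', φ x + y * (x' - x) ≤ φ x'}

lemma aux_max_exists (φ : ℝ → ℝ) (hφc : Continuous φ)
    (hsl : Tendsto (fun x => φ x / |x|) (Bornology.cobounded ℝ) atTop) (y : ℝ) :
    ∃ x, ∀ x', x' * y - φ x' ≤ x * y - φ x := by
  obtain ⟨R, -, hR⟩ := (Filter.hasBasis_cobounded_norm (E := ℝ)).eventually_iff.1
      (hsl.eventually_ge_atTop (|y| + |φ 0| + 1))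
  set R' := max R 1 with hR'
  have hR1 : (1:ℝ) ≤ R' := le_max_right R 1
  have h0mem : (0:ℝ) ∈ Icc (-R') R' := by
    constructor <;> simp only [hR'] <;> linarith
  obtain ⟨x, hxmem, hxmax⟩ := isCompact_Icc.exists_isMaxOn ⟨0, h0mem⟩
      ((continuous_id.mul continuous_const).sub hφc).continuousOn
  refine ⟨x, fun x' => ?_⟩
  by_cases hx' : x' ∈ Icc (-R') R'
  · exact isMaxOn_iff.1 hxmax x' hx'
  · have habs : R' < |x'| := by
      rw [mem_Icc, not_and_or, not_le, not_le] at hx'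
      rw [lt_abs]
      rcases hx' with h | h
      · right; linarith
      · left; exact h
    have hRx : R ≤ ‖x'‖ := by
      rw [Real.norm_eq_abs]; linarith [le_max_left R 1]
    have hφx' := hR hRx
    have habs0 : (0:ℝ) < |x'| := by linarith
    have h1 : (|y| + |φ 0| + 1) * |x'| ≤ φ x' := (le_div_iff₀ habs0).1 hφx'
    have h2 : x' * y ≤ |x'| * |y| := le_trans (le_abs_self _) (abs_mul x' y).le
    have h3 : (1:ℝ) ≤ |x'| := by linarith
    have h4 : 0 * y - φ 0 ≤ x * y - φ x := isMaxOn_iff.1 hxmax 0 h0mem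
    have h5 : φ 0 ≤ |φ 0| := le_abs_self _
    nlinarith [mul_nonneg (show (0:ℝ) ≤ |φ 0| + 1 by positivity)
      (show (0:ℝ) ≤ |x'| - 1 by linarith)]

lemma aux_unique {φ : ℝ → ℝ} (hφ : StrictConvexOn ℝ Set.univ φ) {y x₁ x₂ : ℝ}
    (h₁ : ∀ x', x' * y - φ x' ≤ x₁ * y - φ x₁) (h₂ : ∀ x', x' * y - φ x' ≤ x₂ * y - φ x₂) :
    x₁ = x₂ := by
  by_contra hne
  have hm := hφ.2 (mem_univ x₁) (mem_univ x₂) hne (by norm_num : (0:ℝ) < 1/2)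
    (by norm_num : (0:ℝ) < 1/2) (by norm_num)
  simp only [smul_eq_mul] at hm
  have ha := h₁ (1/2 * x₁ + 1/2 * x₂)
  have hb := h₂ x₁
  have hc := h₁ x₂
  nlinarith [hm, ha, hb, hc]

lemma aux_subgrad_exists {φ : ℝ → ℝ} (hφ : ConvexOn ℝ Set.univ φ) (x₀ : ℝ) :
    ∃ y, y ∈ subdiff φ x₀ := by
  set S : Set ℝ := (fun x => (φ x₀ - φ x) / (x₀ - x)) '' Iio x₀ with hS
  have hne : S.Nonempty := ⟨_, ⟨x₀ - 1, by simp, rfl⟩⟩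
  have hub : ∀ z ∈ S, z ≤ φ (x₀ + 1) - φ x₀ := by
    rintro z ⟨x, hx, rfl⟩
    have hx' : x < x₀ := hx
    have h := hφ.slope_mono_adjacent (mem_univ x) (mem_univ (x₀+1)) hx' (by linarith)
    rw [show x₀ + 1 - x₀ = (1:ℝ) by ring, div_one] at h
    exact h
  have hbdd : BddAbove S := ⟨_, hub⟩
  refine ⟨sSup S, ?_⟩
  simp only [subdiff, Set.mem_setOf_eq]
  intro x'
  rcases lt_trichotomy x' x₀ with h | h | h
  · have hmem : (φ x₀ - φ x')/(x₀ - x') ∈ S := ⟨x', h, rfl⟩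
    have hle := le_csSup hbdd hmem
    rw [div_le_iff₀ (by linarith : (0:ℝ) < x₀ - x')] at hle
    nlinarith [hle]
  · rw [h]; simp
  · have hub2 : sSup S ≤ (φ x' - φ x₀)/(x' - x₀) := by
      apply csSup_le hne
      rintro z ⟨x, hx, rfl⟩
      exact hφ.slope_mono_adjacent (mem_univ x) (mem_univ x') hx h
    rw [le_div_iff₀ (by linarith : (0:ℝ) < x' - x₀)] at hub2
    nlinarith [hub2]

lemma aux_cont {φ : ℝ → ℝ} (hφ : StrictConvexOn ℝ Set.univ φ) (g : ℝ → ℝ)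
    (hg : ∀ y x', x' * y - φ x' ≤ g y * y - φ (g y)) : Continuous g := by
  have hsub : ∀ y x', φ (g y) + y * (x' - g y) ≤ φ x' := by
    intro y x'
    nlinarith [hg y x']
  have hup : ∀ y₀, ∀ ε > (0:ℝ), ∃ d > (0:ℝ), ∀ y, y - y₀ < d → g y < g y₀ + ε := by
    intro y₀ ε hε
    have hslt : (φ (g y₀ + ε/2) - φ (g y₀)) / (ε/2)
        < (φ (g y₀ + ε) - φ (g y₀ + ε/2)) / (ε/2) := by
      have h := hφ.slope_strict_mono_adjacent (mem_univ (g y₀)) (mem_univ (g y₀ + ε))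
        (show g y₀ < g y₀ + ε/2 by linarith) (show g y₀ + ε/2 < g y₀ + ε by linarith)
      rw [show g y₀ + ε/2 - g y₀ = ε/2 by ring,
        show g y₀ + ε - (g y₀ + ε/2) = ε/2 by ring] at h
      exact h
    refine ⟨_, sub_pos.2 hslt, fun y hy => ?_⟩
    by_contra hge
    push_neg at hge
    have h1 : y₀ * (ε/2) ≤ φ (g y₀ + ε/2) - φ (g y₀) := by
      nlinarith [hsub y₀ (g y₀ + ε/2)]
    have h1' : y₀ ≤ (φ (g y₀ + ε/2) - φ (g y₀)) / (ε/2) :=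
      (le_div_iff₀ (by positivity)).2 h1
    have h2 : (φ (g y₀ + ε) - φ (g y₀ + ε/2)) / (ε/2)
        ≤ (φ (g y) - φ (g y₀ + ε/2)) / (g y - (g y₀ + ε/2)) := by
      have := hφ.convexOn.secant_mono (mem_univ (g y₀ + ε/2)) (mem_univ (g y₀ + ε))
        (mem_univ (g y)) (show g y₀ + ε ≠ g y₀ + ε/2 by intro hh; linarith [hh])
        (show g y ≠ g y₀ + ε/2 by intro hh; linarith [hh]) hge
      rw [show g y₀ + ε - (g y₀ + ε/2) = ε/2 by ring] at this
      exact this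
    have h3 : (φ (g y) - φ (g y₀ + ε/2)) / (g y - (g y₀ + ε/2)) ≤ y := by
      rw [div_le_iff₀ (show (0:ℝ) < g y - (g y₀ + ε/2) by linarith)]
      nlinarith [hsub y (g y₀ + ε/2)]
    linarith [h2.trans h3]
  have hdown : ∀ y₀, ∀ ε > (0:ℝ), ∃ d > (0:ℝ), ∀ y, y₀ - y < d → g y₀ - ε < g y := by
    intro y₀ ε hε
    have hslt : (φ (g y₀ - ε/2) - φ (g y₀ - ε)) / (ε/2)
        < (φ (g y₀) - φ (g y₀ - ε/2)) / (ε/2) := by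
      have h := hφ.slope_strict_mono_adjacent (mem_univ (g y₀ - ε)) (mem_univ (g y₀))
        (show g y₀ - ε < g y₀ - ε/2 by linarith) (show g y₀ - ε/2 < g y₀ by linarith)
      rw [show g y₀ - ε/2 - (g y₀ - ε) = ε/2 by ring,
        show g y₀ - (g y₀ - ε/2) = ε/2 by ring] at h
      exact h
    refine ⟨_, sub_pos.2 hslt, fun y hy => ?_⟩
    by_contra hge
    push_neg at hge
    have h1 : φ (g y₀) - φ (g y₀ - ε/2) ≤ y₀ * (ε/2) := by
      nlinarith [hsub y₀ (g y₀ - ε/2)]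
    have h1' : (φ (g y₀) - φ (g y₀ - ε/2)) / (ε/2) ≤ y₀ :=
      (div_le_iff₀ (by positivity)).2 h1
    have h2 : y ≤ (φ (g y₀ - ε/2) - φ (g y)) / (g y₀ - ε/2 - g y) := by
      rw [le_div_iff₀ (show (0:ℝ) < g y₀ - ε/2 - g y by linarith)]
      nlinarith [hsub y (g y₀ - ε/2)]
    have h3 : (φ (g y₀ - ε/2) - φ (g y)) / (g y₀ - ε/2 - g y)
        ≤ (φ (g y₀ - ε/2) - φ (g y₀ - ε)) / (ε/2) := by
      have := hφ.convexOn.secant_mono (mem_univ (g y₀ - ε/2)) (mem_univ (g y))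
        (mem_univ (g y₀ - ε)) (show g y ≠ g y₀ - ε/2 by intro hh; linarith [hh])
        (show g y₀ - ε ≠ g y₀ - ε/2 by intro hh; linarith [hh]) hge
      rw [show φ (g y) - φ (g y₀ - ε/2) = -(φ (g y₀ - ε/2) - φ (g y)) by ring,
        show g y - (g y₀ - ε/2) = -(g y₀ - ε/2 - g y) by ring,
        show φ (g y₀ - ε) - φ (g y₀ - ε/2) = -(φ (g y₀ - ε/2) - φ (g y₀ - ε)) by ring,
        show g y₀ - ε - (g y₀ - ε/2) = -(ε/2) by ring, neg_div_neg_eq, neg_div_neg_eq] at this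
      exact this
    linarith [h2.trans h3]
  rw [Metric.continuous_iff]
  intro y₀ ε hε
  obtain ⟨d₁, hd₁, h₁⟩ := hup y₀ ε hε
  obtain ⟨d₂, hd₂, h₂⟩ := hdown y₀ ε hε
  refine ⟨min d₁ d₂, lt_min hd₁ hd₂, fun y hy => ?_⟩
  rw [Real.dist_eq] at hy ⊢
  rw [abs_lt] at hy ⊢
  constructor
  · linarith [h₂ y (by linarith [hy.1, min_le_right d₁ d₂] : y₀ - y < d₂)]
  · linarith [h₁ y (by linarith [hy.2, min_le_left d₁ d₂] : y - y₀ < d₁)]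
theorem stmt13 (φ ψ : ℝ → ℝ) (hφ : StrictConvexOn ℝ Set.univ φ)
    (hsl : Tendsto (fun x => φ x / |x|) (Bornology.cobounded ℝ) atTop)
    (hψ : ∀ y, IsLUB {z | ∃ x, z = x * y - φ x} (ψ y))
    (P : Set ℝ) (hPmeas : MeasurableSet P) (hP : 0 < volume P)
    (hstrong : ∀ x₀ ∈ P, ∃ c > (0:ℝ), ∃ δ > (0:ℝ), ∀ y₀ ∈ subdiff φ x₀,
      ∀ x ∈ Metric.ball x₀ δ, c * |x - x₀|^2 ≤ φ x - φ x₀ - y₀ * (x - x₀)) :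
    0 < volume {y : ℝ | ∃ d > (0:ℝ), HasDerivAt (deriv ψ) d y} := by
  classical
  have hφc : Continuous φ :=
    continuousOn_univ.1 (hφ.convexOn.continuousOn isOpen_univ)
  choose g hg using aux_max_exists φ hφc hsl
  have huniq : ∀ y x, (∀ x', x' * y - φ x' ≤ x * y - φ x) → g y = x :=
    fun y x h => aux_unique hφ (hg y) h
  have hsubg : ∀ y, y ∈ subdiff φ (g y) := by
    intro y
    simp only [subdiff, Set.mem_setOf_eq]
    intro x'
    nlinarith [hg y x']
  have hsub' : ∀ x y, y ∈ subdiff φ x → g y = x := by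
    intro x y hy
    simp only [subdiff, Set.mem_setOf_eq] at hy
    refine huniq y x fun x' => ?_
    nlinarith [hy x']
  have hmono : Monotone g := by
    intro y₁ y₂ h
    rcases h.eq_or_lt with rfl | hlt
    · exact le_rfl
    by_contra hgt
    push_neg at hgt
    nlinarith [hg y₁ (g y₂), hg y₂ (g y₁)]
  have hcont : Continuous g := aux_cont hφ g hg
  -- value of ψ
  have hψval : ∀ y, ψ y = g y * y - φ (g y) := by
    intro y
    refine (hψ y).unique (IsGreatest.isLUB ⟨⟨g y, rfl⟩, ?_⟩)
    rintro z ⟨x, rfl⟩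
    exact hg y x
  have hψub : ∀ y x, x * y - φ x ≤ ψ y := fun y x => (hψ y).1 ⟨x, rfl⟩
  -- ψ is differentiable with derivative g
  have hψd : ∀ y₀, HasDerivAt ψ (g y₀) y₀ := by
    intro y₀
    rw [hasDerivAt_iff_isLittleO, Asymptotics.isLittleO_iff]
    intro c hc
    filter_upwards [Metric.tendsto_nhds.mp (hcont.tendsto y₀) c hc] with y hy
    rw [Real.dist_eq] at hy
    have l1 : g y₀ * (y - y₀) ≤ ψ y - ψ y₀ := by
      have h := hψub y (g y₀)
      rw [hψval y₀]
      nlinarith [h]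
    have l2 : ψ y - ψ y₀ ≤ g y * (y - y₀) := by
      have h := hψub y₀ (g y)
      rw [hψval y]
      nlinarith [h]
    have habs : |ψ y - ψ y₀ - (y - y₀) * g y₀| ≤ |g y - g y₀| * |y - y₀| := by
      rw [abs_le]
      have hprod : (g y - g y₀) * (y - y₀) ≤ |g y - g y₀| * |y - y₀| :=
        le_trans (le_abs_self _) (abs_mul _ _).le
      constructor
      · nlinarith [abs_nonneg (g y - g y₀), abs_nonneg (y - y₀),
          mul_nonneg (abs_nonneg (g y - g y₀)) (abs_nonneg (y - y₀))]
      · nlinarith [hprod]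
    simp only [Real.norm_eq_abs, smul_eq_mul]
    calc |ψ y - ψ y₀ - (y - y₀) * g y₀| ≤ |g y - g y₀| * |y - y₀| := habs
      _ ≤ c * |y - y₀| := mul_le_mul_of_nonneg_right hy.le (abs_nonneg _)
  have hderiv : deriv ψ = g := funext fun y => (hψd y).deriv
  rw [hderiv]
  -- derivative of g is nonnegative wherever it exists
  have dnonneg : ∀ {y d : ℝ}, HasDerivAt g d y → 0 ≤ d := by
    intro y d hd
    refine ge_of_tendsto (hasDerivAt_iff_tendsto_slope.1 hd) ?_
    filter_upwards [self_mem_nhdsWithin] with z hz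
    have hz' : z ≠ y := hz
    rw [slope_def_field]
    rcases lt_or_gt_of_ne hz' with h | h
    · exact div_nonneg_iff.2 (Or.inr ⟨by linarith [hmono h.le], by linarith⟩)
    · exact div_nonneg (by linarith [hmono h.le]) (by linarith)
  by_contra hcon
  push_neg at hcon
  have hS0 : volume {y : ℝ | ∃ d > (0:ℝ), HasDerivAt g d y} = 0 :=
    le_antisymm hcon (zero_le)
  set A : Set ℝ := {y | HasDerivAt g 0 y} with hA
  have hAc : volume Aᶜ = 0 := by
    have h1 : volume {y | ¬ DifferentiableAt ℝ g y} = 0 := ae_iff.1 hmono.ae_differentiableAt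
    have hsubset : Aᶜ ⊆ {y | ¬ DifferentiableAt ℝ g y}
        ∪ {y : ℝ | ∃ d > (0:ℝ), HasDerivAt g d y} := by
      intro y hy
      by_cases hdiff : DifferentiableAt ℝ g y
      · right
        have hD := hdiff.hasDerivAt
        refine ⟨deriv g y, ?_, hD⟩
        rcases (dnonneg hD).lt_or_eq with h | h
        · exact h
        · exact absurd (show HasDerivAt g 0 y from h ▸ hD) hy
      · left; exact hdiff
    exact measure_mono_null hsubset (measure_union_null h1 hS0)
  -- image of A is null (Sard)
  have hAimg : volume (g '' A) = 0 := by
    refine addHaar_image_eq_zero_of_det_fderivWithin_eq_zero volume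
      (f' := fun _ => ContinuousLinearMap.smulRight (1 : ℝ →L[ℝ] ℝ) (0:ℝ))
      (fun y hy => ?_) (fun y _ => ?_)
    · exact (show HasDerivAt g 0 y from hy).hasDerivWithinAt.hasFDerivWithinAt
    · simp [ContinuousLinearMap.det_smulRight]
  -- the key quantitative estimate from strong convexity
  have hkey : ∀ x₀ ∈ P, ∀ y₀ ∈ subdiff φ x₀, ∃ r > (0:ℝ), ∃ L > (0:ℝ),
      ∀ y, |y - y₀| < r → |g y - x₀| ≤ L * |y - y₀| := by
    intro x₀ hx₀ y₀ hy₀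
    obtain ⟨c, hc, δ, hδ, hineq⟩ := hstrong x₀ hx₀
    refine ⟨c * δ / 2, by positivity, 1 / c, by positivity, fun y hy => ?_⟩
    rcases eq_or_ne (g y) x₀ with h | h
    · rw [h, sub_self, abs_zero]; positivity
    have hgy := hsubg y
    simp only [subdiff, Set.mem_setOf_eq] at hgy hy₀
    have habs : 0 < |g y - x₀| := abs_pos.2 (sub_ne_zero.2 h)
    set t := min 1 (δ / 2 / |g y - x₀|) with htdef
    have ht0 : 0 < t := lt_min one_pos (by positivity)
    have ht1 : t ≤ 1 := min_le_left _ _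
    set z := x₀ + t * (g y - x₀) with hzdef
    have hzx : |z - x₀| = t * |g y - x₀| := by
      rw [hzdef, add_sub_cancel_left, abs_mul, abs_of_pos ht0]
    have hzd : |z - x₀| ≤ δ / 2 := by
      rw [hzx]
      calc t * |g y - x₀| ≤ (δ / 2 / |g y - x₀|) * |g y - x₀| :=
            mul_le_mul_of_nonneg_right (min_le_right _ _) habs.le
        _ = δ / 2 := div_mul_cancel₀ _ habs.ne'
    have hzball : z ∈ Metric.ball x₀ δ := by
      rw [Metric.mem_ball, Real.dist_eq]
      calc |z - x₀| ≤ δ / 2 := hzd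
        _ < δ := by linarith
    have hstrong' := hineq y₀ hy₀ z hzball
    have hconv : φ z ≤ (1 - t) * φ x₀ + t * φ (g y) := by
      have h2 := hφ.convexOn.2 (mem_univ x₀) (mem_univ (g y))
        (by linarith : (0:ℝ) ≤ 1 - t) ht0.le (by ring)
      simp only [smul_eq_mul] at h2
      rw [show (1 - t) * x₀ + t * g y = x₀ + t * (g y - x₀) by ring] at h2
      rw [hzdef]
      exact h2
    have hsx : φ (g y) + y * (x₀ - g y) ≤ φ x₀ := hgy x₀
    have hupper : φ z ≤ φ x₀ + y * (z - x₀) := by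
      rw [show z - x₀ = t * (g y - x₀) by rw [hzdef]; ring]
      nlinarith [hconv, hsx, ht0.le,
        mul_le_mul_of_nonneg_left (show φ (g y) ≤ φ x₀ + y * (g y - x₀) by linarith [hsx]) ht0.le]
    have hcomb : c * |z - x₀|^2 ≤ (y - y₀) * (z - x₀) := by nlinarith [hstrong', hupper]
    have hzpos : 0 < |z - x₀| := by rw [hzx]; positivity
    have hle : c * |z - x₀| ≤ |y - y₀| := by
      have h3 : (y - y₀) * (z - x₀) ≤ |y - y₀| * |z - x₀| :=
        le_trans (le_abs_self _) (abs_mul _ _).le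
      nlinarith [hcomb.trans h3, hzpos]
    rcases min_cases 1 (δ / 2 / |g y - x₀|) with ⟨hteq, hge⟩ | ⟨hteq, hlt⟩
    · have hzz : |z - x₀| = |g y - x₀| := by rw [hzx, htdef, hteq, one_mul]
      rw [hzz] at hle
      rw [show (1/c) * |y - y₀| = |y - y₀| / c by ring]
      exact (le_div_iff₀' hc).2 hle
    · exfalso
      have hzz : |z - x₀| = δ / 2 := by
        rw [hzx, htdef, hteq, div_mul_cancel₀ _ habs.ne']
      rw [hzz] at hle
      linarith only [hle, hy]
  -- covering of P
  set Q : Set ℝ := {y | ∃ x₀ ∈ P, y ∈ subdiff φ x₀} with hQdef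
  have hPQ : P ⊆ g '' Q := by
    intro x₀ hx₀
    obtain ⟨y₀, hy₀⟩ := aux_subgrad_exists hφ.convexOn x₀
    exact ⟨y₀, ⟨x₀, hx₀, hy₀⟩, hsub' x₀ y₀ hy₀⟩
  set QQ : ℕ → Set ℝ := fun n => {y₀ | ∃ x₀ ∈ P, y₀ ∈ subdiff φ x₀ ∧
      ∀ y, |y - y₀| < 1/(n+1 : ℝ) → |g y - x₀| ≤ (n+1 : ℝ) * |y - y₀|} with hQQ
  have hQcover : Q ⊆ ⋃ n : ℕ, QQ n := by
    rintro y₀ ⟨x₀, hx₀, hy₀⟩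
    obtain ⟨r, hr, L, hL, hb⟩ := hkey x₀ hx₀ y₀ hy₀
    obtain ⟨n, hn⟩ := exists_nat_gt (max L (1/r))
    refine mem_iUnion.2 ⟨n, x₀, hx₀, hy₀, fun y hy => ?_⟩
    have hn1 : L ≤ (n+1:ℝ) := by
      have h' := (le_max_left L (1/r)).trans_lt hn
      linarith only [h']
    have hn2 : 1/r ≤ (n+1:ℝ) := by
      have h' := (le_max_right L (1/r)).trans_lt hn
      linarith only [h']
    have hyr : |y - y₀| < r := by
      have hinv : 1/(n+1:ℝ) ≤ r := by
        rw [div_le_iff₀ (by positivity : (0:ℝ) < (n:ℝ)+1)]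
        rw [div_le_iff₀ hr] at hn2
        linarith [hn2]
      linarith [hy]
    exact le_trans (hb y hyr) (mul_le_mul_of_nonneg_right hn1 (abs_nonneg _))
  have hIco : ∀ (n : ℕ) (k : ℤ), ∀ y₁ ∈ Ico ((k:ℝ)/(n+1)) (((k:ℝ)+1)/(n+1)),
      ∀ y₂ ∈ Ico ((k:ℝ)/(n+1)) (((k:ℝ)+1)/(n+1)), |y₂ - y₁| < 1/(n+1:ℝ) := by
    intro n k y₁ hy₁ y₂ hy₂
    have hkey : ((k:ℝ)+1)/(n+1) - (k:ℝ)/(n+1) = 1/(n+1:ℝ) := by ring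
    rw [abs_lt]
    constructor <;> [linarith [hy₁.1, hy₁.2, hy₂.1, hy₂.2]; linarith [hy₁.1, hy₁.2, hy₂.1, hy₂.2]]
  have hlip : ∀ (n : ℕ) (k : ℤ), LipschitzOnWith ((n:ℝ≥0)+1) g
      (QQ n ∩ Ico ((k:ℝ)/(n+1)) (((k:ℝ)+1)/(n+1))) := by
    intro n k
    apply LipschitzOnWith.of_dist_le_mul
    rintro y₁ ⟨⟨x₁, hx₁P, hy₁sub, hb₁⟩, hI₁⟩ y₂ ⟨⟨x₂, hx₂P, hy₂sub, hb₂⟩, hI₂⟩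
    have hgy₁ : g y₁ = x₁ := hsub' x₁ y₁ hy₁sub
    have hd := hIco n k y₁ hI₁ y₂ hI₂
    have hbb := hb₁ y₂ hd
    rw [Real.dist_eq, Real.dist_eq]
    rw [abs_sub_comm y₁ y₂]
    calc |g y₁ - g y₂| = |g y₂ - x₁| := by rw [hgy₁, abs_sub_comm]
      _ ≤ (n+1:ℝ) * |y₂ - y₁| := hbb
      _ = ((n:ℝ≥0)+1 : ℝ≥0) * |y₂ - y₁| := by push_cast; ring
  have himg_null : ∀ (n : ℕ) (k : ℤ),
      volume (g '' ((QQ n ∩ Ico ((k:ℝ)/(n+1)) (((k:ℝ)+1)/(n+1))) ∩ Aᶜ)) = 0 := by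
    intro n k
    have hlip' : LipschitzOnWith ((n:ℝ≥0)+1) g
        ((QQ n ∩ Ico ((k:ℝ)/(n+1)) (((k:ℝ)+1)/(n+1))) ∩ Aᶜ) :=
      (hlip n k).mono inter_subset_left
    have h0 : volume ((QQ n ∩ Ico ((k:ℝ)/(n+1)) (((k:ℝ)+1)/(n+1))) ∩ Aᶜ) = 0 :=
      measure_mono_null inter_subset_right hAc
    have h2 := hlip'.hausdorffMeasure_image_le (zero_le_one)
    simp only [hausdorffMeasure_real] at h2
    rw [h0, mul_zero] at h2
    exact le_antisymm h2 (zero_le)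
  -- put it together
  have hQsub : g '' Q ⊆ g '' A ∪
      ⋃ (n : ℕ) (k : ℤ), g '' ((QQ n ∩ Ico ((k:ℝ)/(n+1)) (((k:ℝ)+1)/(n+1))) ∩ Aᶜ) := by
    rintro - ⟨y, hyQ, rfl⟩
    by_cases hyA : y ∈ A
    · exact Or.inl ⟨y, hyA, rfl⟩
    · right
      obtain ⟨n, hn⟩ := mem_iUnion.1 (hQcover hyQ)
      refine mem_iUnion.2 ⟨n, mem_iUnion.2 ⟨⌊y * ((n:ℝ)+1)⌋, ⟨y, ⟨⟨hn, ?_⟩, hyA⟩, rfl⟩⟩⟩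
      have hpos : (0:ℝ) < (n:ℝ)+1 := by positivity
      constructor
      · rw [div_le_iff₀ hpos]
        exact Int.floor_le _
      · rw [lt_div_iff₀ hpos]
        push_cast
        exact Int.lt_floor_add_one _
  have hPnull : volume P = 0 := by
    refine measure_mono_null (hPQ.trans hQsub) ?_
    refine measure_union_null hAimg ?_
    refine measure_iUnion_null fun n => measure_iUnion_null fun k => himg_null n k
  exact absurd hPnull hP.ne'
end
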